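/- arXiv:1311.4718 — 3 statements merged into one kernel-verified Lean document; each statement's English description precedes it below -/
import Mathlib

section
/- Let k ≥ 1 and K̂ = [-1,1]². Suppose q̂₁ is a polynomial on K̂ such that q̂₁·ν̂₁ has vanishing moments of degree ≤ k-1 against on the two vertical edges ξ = ±1 (i.e., ∫_{-1}^1 q̂₁(±1,η) p(η) dη = 0 for all p ∈ P_{k-1}), and q̂₁ ∈ P_k(ξ,η) \ span{η^k} ⊕ span{ξ^{k+1}, ξ²η^{k-1}}. Then q̂₁ can be written as q̂₁ = (1-ξ²)(ĝ₁ + c₁ J_{k-1}(ξ) + b₁ L_{k-1}(η)) with ĝ₁ ∈ P_{k-2}(K̂) and constants c₁, b₁. -/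
open intervalIntegral MvPolynomial

/-- The Jacobi-type polynomials of the paper. -/
noncomputable def Jac (l : ℕ) (ξ : ℝ) : ℝ :=
  ((l + 1).factorial : ℝ) ^ 2 *
    ∑ s ∈ Finset.range (l + 1),
      (1 / ((s.factorial * (l + 1 - s).factorial * (s + 1).factorial * (l - s).factorial : ℕ) : ℝ)) *
        ((ξ - 1) / 2) ^ (l - s) * ((ξ + 1) / 2) ^ s

/-- The Legendre polynomials via the Rodrigues formula. -/
noncomputable def Leg (l : ℕ) (ξ : ℝ) : ℝ :=
  (1 / ((2 : ℝ) ^ l * (l.factorial : ℝ))) * iteratedDeriv l (fun x : ℝ => (x ^ 2 - 1) ^ l) ξ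

/-- Evaluation of a bivariate polynomial (variable `0` is `x`/`ξ`, variable `1` is `y`/`η`). -/
noncomputable def ev2 (p : MvPolynomial (Fin 2) ℝ) (x y : ℝ) : ℝ :=
  MvPolynomial.eval ![x, y] p

/-- Membership in `P_k \ span{y^k}`: total degree at most `k` and the coefficient of `y^k`
vanishes. -/
def memPkNoYk (k : ℕ) (p : MvPolynomial (Fin 2) ℝ) : Prop :=
  p.totalDegree ≤ k ∧ MvPolynomial.coeff (Finsupp.single 1 k) p = 0

/-- Membership in `P_k \ span{x^k}`. -/
def memPkNoXk (k : ℕ) (p : MvPolynomial (Fin 2) ℝ) : Prop :=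
  p.totalDegree ≤ k ∧ MvPolynomial.coeff (Finsupp.single 0 k) p = 0

/-- First component of the enriched BDFM space:
`P_k \ span{y^k} ⊕ span{x^{k+1}, x² y^{k-1}}`. -/
def memH1 (k : ℕ) (q : MvPolynomial (Fin 2) ℝ) : Prop :=
  ∃ p : MvPolynomial (Fin 2) ℝ, ∃ a b : ℝ, memPkNoYk k p ∧
    q = p + MvPolynomial.C a * X 0 ^ (k + 1) + MvPolynomial.C b * X 0 ^ 2 * X 1 ^ (k - 1)

/-- Second component of the enriched BDFM space:
`P_k \ span{x^k} ⊕ span{y^{k+1}, y² x^{k-1}}`. -/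
def memH2 (k : ℕ) (q : MvPolynomial (Fin 2) ℝ) : Prop :=
  ∃ p : MvPolynomial (Fin 2) ℝ, ∃ a b : ℝ, memPkNoXk k p ∧
    q = p + MvPolynomial.C a * X 1 ^ (k + 1) + MvPolynomial.C b * X 1 ^ 2 * X 0 ^ (k - 1)


noncomputable def JacP (l : ℕ) : Polynomial ℝ :=
  Polynomial.C (((l + 1).factorial : ℝ) ^ 2) *
    ∑ s ∈ Finset.range (l + 1),
      Polynomial.C ((1 / ((s.factorial * (l + 1 - s).factorial * (s + 1).factorial * (l - s).factorial : ℕ) : ℝ)) * (1 / 2) ^ l) *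
        ((Polynomial.X - 1) ^ (l - s) * (Polynomial.X + 1) ^ s)

noncomputable def LegP (l : ℕ) : Polynomial ℝ :=
  Polynomial.C (1 / ((2 : ℝ) ^ l * (l.factorial : ℝ))) *
    Polynomial.derivative^[l] ((Polynomial.X ^ 2 - 1) ^ l)

lemma iteratedDeriv_eval (Q : Polynomial ℝ) (n : ℕ) :
    iteratedDeriv n (fun x : ℝ => Q.eval x) = fun x => (Polynomial.derivative^[n] Q).eval x := by
  induction n with
  | zero => simp
  | succ n ih =>
    rw [iteratedDeriv_succ, ih, Function.iterate_succ_apply']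
    funext x
    exact Polynomial.deriv _

lemma JacP_eval (l : ℕ) (ξ : ℝ) : (JacP l).eval ξ = Jac l ξ := by
  simp only [JacP, Jac, Polynomial.eval_mul, Polynomial.eval_C, Polynomial.eval_finset_sum,
    Polynomial.eval_pow, Polynomial.eval_sub, Polynomial.eval_add, Polynomial.eval_X,
    Polynomial.eval_one]
  congr 1
  refine Finset.sum_congr rfl fun s hs => ?_
  have hsl : s ≤ l := Nat.lt_succ_iff.mp (Finset.mem_range.mp hs)
  have h2 : ((ξ - 1) / 2) ^ (l - s) = (ξ - 1) ^ (l - s) * (1 / 2 : ℝ) ^ (l - s) := by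
    rw [← mul_pow]; ring_nf
  have h3 : ((ξ + 1) / 2) ^ s = (ξ + 1) ^ s * (1 / 2 : ℝ) ^ s := by
    rw [← mul_pow]; ring_nf
  have h1 : (1 / 2 : ℝ) ^ l = (1 / 2 : ℝ) ^ (l - s) * (1 / 2 : ℝ) ^ s := by
    rw [← pow_add, Nat.sub_add_cancel hsl]
  rw [h2, h3, h1]
  ring

lemma LegP_eval (l : ℕ) (ξ : ℝ) : (LegP l).eval ξ = Leg l ξ := by
  have : (fun x : ℝ => (x ^ 2 - 1) ^ l) =
      fun x => ((Polynomial.X ^ 2 - 1 : Polynomial ℝ) ^ l).eval x := by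
    funext x; simp
  simp [LegP, Leg, this, iteratedDeriv_eval]

lemma monic_XsubOne_pow_mul (l s : ℕ) :
    ((Polynomial.X - 1 : Polynomial ℝ) ^ (l - s) * (Polynomial.X + 1) ^ s).Monic := by
  have h1 : (Polynomial.X - 1 : Polynomial ℝ).Monic := by
    simpa using Polynomial.monic_X_sub_C (1 : ℝ)
  have h2 : (Polynomial.X + 1 : Polynomial ℝ).Monic := by
    simpa using Polynomial.monic_X_add_C (1 : ℝ)
  exact (h1.pow _).mul (h2.pow _)

lemma natDegree_XsubOne_pow_mul (l s : ℕ) (hs : s ≤ l) :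
    ((Polynomial.X - 1 : Polynomial ℝ) ^ (l - s) * (Polynomial.X + 1) ^ s).natDegree = l := by
  have h1 : (Polynomial.X - 1 : Polynomial ℝ).Monic := by
    simpa using Polynomial.monic_X_sub_C (1 : ℝ)
  have h2 : (Polynomial.X + 1 : Polynomial ℝ).Monic := by
    simpa using Polynomial.monic_X_add_C (1 : ℝ)
  rw [(h1.pow _).natDegree_mul (h2.pow _), Polynomial.natDegree_pow, Polynomial.natDegree_pow]
  have e1 : (Polynomial.X - 1 : Polynomial ℝ).natDegree = 1 := by
    simpa using Polynomial.natDegree_X_sub_C (1 : ℝ)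
  have e2 : (Polynomial.X + 1 : Polynomial ℝ).natDegree = 1 := by
    have : (Polynomial.X + 1 : Polynomial ℝ) = Polynomial.X + Polynomial.C 1 := by simp
    rw [this, Polynomial.natDegree_X_add_C]
  rw [e1, e2]; omega

lemma JacP_natDegree_le (l : ℕ) : (JacP l).natDegree ≤ l := by
  refine (Polynomial.natDegree_C_mul_le _ _).trans ?_
  refine Polynomial.natDegree_sum_le_of_forall_le _ _ fun s hs => ?_
  have hsl : s ≤ l := Nat.lt_succ_iff.mp (Finset.mem_range.mp hs)
  refine (Polynomial.natDegree_C_mul_le _ _).trans ?_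
  rw [natDegree_XsubOne_pow_mul l s hsl]

lemma JacP_coeff_pos (l : ℕ) : 0 < (JacP l).coeff l := by
  rw [JacP, Polynomial.coeff_C_mul, Polynomial.finset_sum_coeff]
  have : ∀ s ∈ Finset.range (l + 1),
      (Polynomial.C ((1 / ((s.factorial * (l + 1 - s).factorial * (s + 1).factorial * (l - s).factorial : ℕ) : ℝ)) * (1 / 2) ^ l) *
        ((Polynomial.X - 1) ^ (l - s) * (Polynomial.X + 1) ^ s)).coeff l
      = (1 / ((s.factorial * (l + 1 - s).factorial * (s + 1).factorial * (l - s).factorial : ℕ) : ℝ)) * (1 / 2) ^ l := by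
    intro s hs
    have hsl : s ≤ l := Nat.lt_succ_iff.mp (Finset.mem_range.mp hs)
    rw [Polynomial.coeff_C_mul]
    have := (monic_XsubOne_pow_mul l s)
    have hd := natDegree_XsubOne_pow_mul l s hsl
    have hc := (monic_XsubOne_pow_mul l s).coeff_natDegree
    rw [hd] at hc
    rw [hc, mul_one]
  rw [Finset.sum_congr rfl this]
  have hpos : ∀ s ∈ Finset.range (l + 1),
      0 < (1 / ((s.factorial * (l + 1 - s).factorial * (s + 1).factorial * (l - s).factorial : ℕ) : ℝ)) * (1 / 2 : ℝ) ^ l := by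
    intro s _
    have : 0 < ((s.factorial * (l + 1 - s).factorial * (s + 1).factorial * (l - s).factorial : ℕ) : ℝ) := by
      have : 0 < s.factorial * (l + 1 - s).factorial * (s + 1).factorial * (l - s).factorial :=
        Nat.mul_pos (Nat.mul_pos (Nat.mul_pos s.factorial_pos (l + 1 - s).factorial_pos)
          (s + 1).factorial_pos) (l - s).factorial_pos
      exact_mod_cast this
    positivity
  have := Finset.sum_pos hpos (by simp)
  positivity


lemma LegP_core_natDegree (l : ℕ) :
    ((Polynomial.X ^ 2 - 1 : Polynomial ℝ) ^ l).natDegree = 2 * l := by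
  have hm : (Polynomial.X ^ 2 - 1 : Polynomial ℝ).Monic := by
    simpa using Polynomial.monic_X_pow_sub_C (1 : ℝ) (two_ne_zero)
  rw [hm.natDegree_pow]
  have : (Polynomial.X ^ 2 - 1 : Polynomial ℝ).natDegree = 2 := by
    simpa using Polynomial.natDegree_X_pow_sub_C (n := 2) (r := (1 : ℝ))
  rw [this, mul_comm]

lemma LegP_natDegree_le (l : ℕ) : (LegP l).natDegree ≤ l := by
  unfold LegP
  refine (Polynomial.natDegree_C_mul_le _ _).trans ?_
  refine (Polynomial.natDegree_iterate_derivative _ _).trans ?_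
  rw [LegP_core_natDegree]; omega

lemma LegP_coeff_ne (l : ℕ) : (LegP l).coeff l ≠ 0 := by
  unfold LegP
  rw [Polynomial.coeff_C_mul, Polynomial.coeff_iterate_derivative]
  have hm : (Polynomial.X ^ 2 - 1 : Polynomial ℝ).Monic := by
    simpa using Polynomial.monic_X_pow_sub_C (1 : ℝ) (two_ne_zero)
  have hc : ((Polynomial.X ^ 2 - 1 : Polynomial ℝ) ^ l).coeff (l + l) = 1 := by
    have := (hm.pow l).coeff_natDegree
    rw [LegP_core_natDegree] at this
    rw [show l + l = 2 * l by omega, this]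
  rw [hc]
  have h1 : (0 : ℝ) < (l + l).descFactorial l := by
    have : (l + l).descFactorial l ≠ 0 := by
      rw [Ne, Nat.descFactorial_eq_zero_iff_lt]; omega
    exact_mod_cast Nat.pos_of_ne_zero this
  have h2 : (0 : ℝ) < 1 / ((2 : ℝ) ^ l * (l.factorial : ℝ)) := by positivity
  simp only [nsmul_eq_mul, mul_one]
  positivity


noncomputable def emb (i : Fin 2) (P : Polynomial ℝ) : MvPolynomial (Fin 2) ℝ :=
  Polynomial.aeval (X i) P

lemma emb_eval (i : Fin 2) (P : Polynomial ℝ) (v : Fin 2 → ℝ) :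
    eval v (emb i P) = P.eval (v i) := by
  rw [emb, Polynomial.aeval_def,
    Polynomial.hom_eval₂ P (algebraMap ℝ (MvPolynomial (Fin 2) ℝ)) (MvPolynomial.eval v) (X i)]
  have hcomp : (MvPolynomial.eval v).comp (algebraMap ℝ (MvPolynomial (Fin 2) ℝ)) =
      RingHom.id ℝ := RingHom.ext fun a => by simp [MvPolynomial.algebraMap_eq]
  rw [hcomp, eval_X]
  rfl

lemma msum_eq (m : Fin 2 →₀ ℕ) : (m.sum fun _ e => e) = m 0 + m 1 := by
  rw [Finsupp.sum_fintype _ _ (fun _ => rfl), Fin.sum_univ_two]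

lemma coeff_zero_of_deg_gt {u : MvPolynomial (Fin 2) ℝ} {m : Fin 2 →₀ ℕ}
    (h : u.totalDegree < m 0 + m 1) : coeff m u = 0 := by
  by_contra hc
  have := le_totalDegree (p := u) (s := m) (by rwa [mem_support_iff])
  rw [msum_eq] at this; omega

lemma totalDegree_le_of_coeff {u : MvPolynomial (Fin 2) ℝ} {d : ℕ}
    (h : ∀ m : Fin 2 →₀ ℕ, d < m 0 + m 1 → coeff m u = 0) : u.totalDegree ≤ d := by
  rw [totalDegree]
  refine Finset.sup_le fun m hm => ?_
  rw [msum_eq]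
  by_contra hc
  exact (mem_support_iff.mp hm) (h m (by omega))

lemma emb_coeff (i : Fin 2) (P : Polynomial ℝ) (m : Fin 2 →₀ ℕ) :
    coeff m (emb i P) =
      if m = Finsupp.single i (m i) then P.coeff (m i) else 0 := by
  rw [emb, Polynomial.aeval_def, Polynomial.eval₂_eq_sum, Polynomial.sum]
  simp only [MvPolynomial.algebraMap_eq]
  rw [MvPolynomial.coeff_sum]
  have hterm : ∀ n : ℕ, coeff m (C (P.coeff n) * X i ^ n)
      = P.coeff n * (if Finsupp.single i n = m then 1 else 0) := by
    intro n
    rw [coeff_C_mul, coeff_X_pow]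
  split_ifs with hm
  · rw [Finset.sum_congr rfl fun n _ => hterm n]
    have hcond : ∀ n : ℕ, (Finsupp.single i n = m) ↔ n = m i := by
      intro n
      constructor
      · intro h; rw [← h]; simp
      · intro h; rw [h, ← hm]
    have hstep : ∀ n ∈ P.support,
        P.coeff n * (if Finsupp.single i n = m then 1 else 0)
          = if n = m i then P.coeff n else 0 := by
      intro n _
      by_cases h : n = m i
      · rw [if_pos ((hcond n).mpr h), if_pos h, mul_one]
      · rw [if_neg (fun hh => h ((hcond n).mp hh)), if_neg h, mul_zero]
    rw [Finset.sum_congr rfl hstep, Finset.sum_ite_eq' _ (m i) (fun n => P.coeff n)]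
    split_ifs with hmem
    · rfl
    · exact (Polynomial.notMem_support_iff.mp hmem).symm
  · rw [Finset.sum_congr rfl fun n _ => hterm n]
    refine Finset.sum_eq_zero fun n _ => ?_
    have : Finsupp.single i n ≠ m := by
      intro h
      apply hm
      rw [← h]; simp
    rw [if_neg this, mul_zero]

lemma emb_totalDegree (i : Fin 2) (P : Polynomial ℝ) {l : ℕ} (h : P.natDegree ≤ l) :
    (emb i P).totalDegree ≤ l := by
  refine totalDegree_le_of_coeff fun m hm => ?_
  rw [emb_coeff]
  split_ifs with hme
  · refine Polynomial.coeff_eq_zero_of_natDegree_lt ?_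
    have : m 0 + m 1 = m i := by
      fin_cases i <;> · rw [hme]; simp
    omega
  · rfl

lemma keycoeff (u : MvPolynomial (Fin 2) ℝ) (m : Fin 2 →₀ ℕ) :
    coeff (m + Finsupp.single 0 2) ((1 - X 0 ^ 2) * u) =
      coeff (m + Finsupp.single 0 2) u - coeff m u := by
  have : (1 - X 0 ^ 2) * u = u - X 0 * (X 0 * u) := by ring
  rw [this, coeff_sub]
  congr 1
  have h2 : m + Finsupp.single 0 2 = Finsupp.single 0 1 + (Finsupp.single 0 1 + m) := by
    rw [← add_assoc, ← Finsupp.single_add]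
    rw [add_comm]
  rw [h2, coeff_X_mul, coeff_X_mul]

lemma aeval_slice_eval (q : MvPolynomial (Fin 2) ℝ) (s t : ℝ) :
    (MvPolynomial.aeval ![Polynomial.C s, Polynomial.X] q).eval t = ev2 q s t := by
  have h := MvPolynomial.comp_aeval_apply (f := ![Polynomial.C s, Polynomial.X])
    (Polynomial.aeval t : Polynomial ℝ →ₐ[ℝ] ℝ) q
  have hv : (fun i => (Polynomial.aeval t : Polynomial ℝ →ₐ[ℝ] ℝ)
      ((![Polynomial.C s, Polynomial.X] : Fin 2 → Polynomial ℝ) i)) = ![s, t] := by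
    funext i
    fin_cases i <;> simp
  have he : (Polynomial.aeval t : Polynomial ℝ →ₐ[ℝ] ℝ)
      (MvPolynomial.aeval ![Polynomial.C s, Polynomial.X] q) =
      (MvPolynomial.aeval ![Polynomial.C s, Polynomial.X] q).eval t := by
    rw [Polynomial.coe_aeval_eq_eval]
  rw [← he, h, hv, ev2]
  rw [show MvPolynomial.aeval ![s, t] q = MvPolynomial.eval ![s, t] q from by
    rw [← MvPolynomial.coe_aeval_eq_eval]; rfl]

lemma coeff_aeval_slice (q : MvPolynomial (Fin 2) ℝ) (s : ℝ) (j : ℕ) :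
    (MvPolynomial.aeval ![Polynomial.C s, Polynomial.X] q).coeff j
      = ∑ m ∈ q.support, if m 1 = j then coeff m q * s ^ (m 0) else 0 := by
  rw [MvPolynomial.aeval_def, MvPolynomial.eval₂_eq' (algebraMap ℝ (Polynomial ℝ)) _ q]
  rw [Polynomial.finset_sum_coeff]
  refine Finset.sum_congr rfl fun m _ => ?_
  have hprod : (∏ i : Fin 2, (![Polynomial.C s, Polynomial.X] : Fin 2 → Polynomial ℝ) i ^ m i)
      = Polynomial.C (s ^ m 0) * Polynomial.X ^ m 1 := by
    rw [Fin.prod_univ_two]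
    simp [map_pow]
  rw [hprod]
  rw [show (algebraMap ℝ (Polynomial ℝ)) (coeff m q) = Polynomial.C (coeff m q) from rfl]
  rw [← mul_assoc, ← Polynomial.C_mul, Polynomial.coeff_C_mul, Polynomial.coeff_X_pow]
  by_cases h : m 1 = j
  · rw [if_pos h, if_pos (by omega), mul_one]
  · rw [if_neg h, if_neg (by omega), mul_zero]


lemma JacP_coeff_ne (l : ℕ) : (JacP l).coeff l ≠ 0 := ne_of_gt (JacP_coeff_pos l)

lemma Jac_zero (ξ : ℝ) : Jac 0 ξ = 1 := by
  simp [Jac]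

lemma edge_slice_zero (k : ℕ) (hk : 1 ≤ k) (q1 p : MvPolynomial (Fin 2) ℝ) (a b : ℝ)
    (hp : p.totalDegree ≤ k) (hpy : coeff (Finsupp.single 1 k) p = 0)
    (hq : q1 = p + C a * X 0 ^ (k + 1) + C b * X 0 ^ 2 * X 1 ^ (k - 1))
    (s : ℝ) (hmom : ∀ j < k, (∫ η in (-1 : ℝ)..1, ev2 q1 s η * η ^ j) = 0) :
    ∀ t : ℝ, ev2 q1 s t = 0 := by
  set v : Fin 2 → Polynomial ℝ := ![Polynomial.C s, Polynomial.X] with hv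
  set Rs : Polynomial ℝ := MvPolynomial.aeval v q1 with hRs
  have hi : ∀ t, Rs.eval t = ev2 q1 s t := fun t => aeval_slice_eval q1 s t
  -- coefficient vanishing in high degree
  have hii : ∀ j, k ≤ j → Rs.coeff j = 0 := by
    intro j hj
    have hsplit : Rs = MvPolynomial.aeval v p
        + Polynomial.C (a * s ^ (k + 1))
        + Polynomial.C (b * s ^ 2) * Polynomial.X ^ (k - 1) := by
      rw [hRs, hq]
      simp only [map_add, map_mul, map_pow, MvPolynomial.aeval_X, MvPolynomial.aeval_C]
      have h0 : v 0 = Polynomial.C s := rfl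
      have h1 : v 1 = Polynomial.X := rfl
      rw [h0, h1]
      simp only [Polynomial.C_mul, Polynomial.C_pow,
        show (algebraMap ℝ (Polynomial ℝ)) = Polynomial.C from rfl]
    rw [hsplit]
    simp only [Polynomial.coeff_add, Polynomial.coeff_C_mul, Polynomial.coeff_C,
      Polynomial.coeff_X_pow]
    rw [if_neg (by omega), if_neg (by omega)]
    rw [coeff_aeval_slice]
    have : ∀ m ∈ p.support, (if m 1 = j then coeff m p * s ^ (m 0) else 0) = 0 := by
      intro m hm
      by_cases hmj : m 1 = j
      · have hle := MvPolynomial.le_totalDegree hm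
        rw [msum_eq] at hle
        have hm0 : m 0 = 0 := by omega
        have hm1 : m 1 = k := by omega
        have hmeq : m = Finsupp.single 1 k := by
          ext i
          fin_cases i
          · simpa using hm0
          · simpa using hm1
        rw [if_pos hmj, hmeq, hpy, zero_mul]
      · rw [if_neg hmj]
    rw [Finset.sum_eq_zero this]
    ring
  -- natDegree < k
  have hiii : Rs.natDegree < k := by
    by_contra hc
    push_neg at hc
    rcases eq_or_ne Rs 0 with h0 | h0
    · rw [h0] at hc; simp at hc; omega
    · exact h0 (Polynomial.leadingCoeff_eq_zero.mp (hii _ hc))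
  -- eval as sum
  have hiv : ∀ t : ℝ, Rs.eval t = ∑ j ∈ Finset.range k, Rs.coeff j * t ^ j := fun t =>
    Polynomial.eval_eq_sum_range' hiii t
  -- integral of square is zero
  have hcont : ∀ j : ℕ, Continuous fun t : ℝ => ev2 q1 s t * t ^ j := by
    intro j
    have : (fun t : ℝ => ev2 q1 s t * t ^ j) = fun t => Rs.eval t * t ^ j := by
      funext t; rw [hi]
    rw [this]
    exact (Rs.continuous_aeval).mul (continuous_pow j)
  have hv0 : (∫ t in (-1 : ℝ)..1, (Rs.eval t) ^ 2) = 0 := by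
    have heq : ∀ t : ℝ, (Rs.eval t) ^ 2
        = ∑ j ∈ Finset.range k, Rs.coeff j * (ev2 q1 s t * t ^ j) := by
      intro t
      rw [pow_two]
      nth_rewrite 2 [hi t]
      rw [hiv t, Finset.sum_mul]
      exact Finset.sum_congr rfl fun j _ => by ring
    rw [intervalIntegral.integral_congr (g := fun t =>
      ∑ j ∈ Finset.range k, Rs.coeff j * (ev2 q1 s t * t ^ j)) (fun t _ => heq t)]
    rw [intervalIntegral.integral_finset_sum]
    · refine Finset.sum_eq_zero fun j hj => ?_
      rw [intervalIntegral.integral_const_mul, hmom j (Finset.mem_range.mp hj), mul_zero]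
    · intro j _
      exact (continuous_const.mul (hcont j)).intervalIntegrable _ _
  -- conclude Rs = 0
  have hRs0 : Rs = 0 := by
    by_contra h0
    have hroots : Set.Finite {t : ℝ | Rs.IsRoot t} := Polynomial.finite_setOf_isRoot h0
    have hnn : 0 ≤ᵐ[MeasureTheory.volume.restrict (Set.Ioc (-1 : ℝ) 1)]
        fun t => (Rs.eval t) ^ 2 :=
      Filter.Eventually.of_forall fun t => sq_nonneg _
    have hint : IntervalIntegrable (fun t => (Rs.eval t) ^ 2)
        MeasureTheory.volume (-1 : ℝ) 1 := by
      exact ((Rs.continuous_aeval).pow 2).intervalIntegrable _ _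
    have hae := (intervalIntegral.integral_eq_zero_iff_of_le_of_nonneg_ae
      (by norm_num : (-1 : ℝ) ≤ 1) hnn hint).mp hv0
    -- measure of nonvanishing set is zero
    have hmeas : MeasureTheory.volume ({t : ℝ | (Rs.eval t) ^ 2 ≠ 0} ∩ Set.Ioc (-1 : ℝ) 1) = 0 := by
      have := hae
      rw [Filter.EventuallyEq, MeasureTheory.ae_iff] at this
      rw [MeasureTheory.Measure.restrict_apply] at this
      · convert this using 2; rfl
      · exact (((Rs.continuous_aeval).pow 2).measurable (MeasurableSet.singleton 0).compl)
    have hsub : Set.Ioc (-1 : ℝ) 1 \ {t : ℝ | Rs.IsRoot t}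
        ⊆ {t : ℝ | (Rs.eval t) ^ 2 ≠ 0} ∩ Set.Ioc (-1 : ℝ) 1 := by
      rintro t ⟨ht1, ht2⟩
      refine ⟨?_, ht1⟩
      simp only [Set.mem_setOf_eq, Polynomial.IsRoot] at ht2 ⊢
      exact pow_ne_zero _ ht2
    have h2 : MeasureTheory.volume (Set.Ioc (-1 : ℝ) 1 \ {t : ℝ | Rs.IsRoot t}) = 0 :=
      MeasureTheory.measure_mono_null hsub hmeas
    rw [MeasureTheory.measure_diff_null (hroots.measure_zero _)] at h2
    simp [Real.volume_Ioc] at h2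
    norm_num at h2
  intro t
  rw [← hi t, hRs0]
  simp

lemma factor_out (q1 : MvPolynomial (Fin 2) ℝ)
    (h1 : ∀ t, ev2 q1 1 t = 0) (hm1 : ∀ t, ev2 q1 (-1) t = 0) :
    ∃ r : MvPolynomial (Fin 2) ℝ, q1 = (1 - X 0 ^ 2) * r := by
  set Q : Polynomial (MvPolynomial (Fin 1) ℝ) := finSuccEquiv ℝ 1 q1 with hQ
  have hroot : ∀ s : ℝ, (∀ t, ev2 q1 s t = 0) →
      Q.eval (MvPolynomial.C s) = 0 := by
    intro s hs
    have key : ∀ v : Fin 1 → ℝ, MvPolynomial.eval v (Q.eval (MvPolynomial.C s)) = 0 := by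
      intro v
      have h1 : Polynomial.eval₂ (MvPolynomial.eval v) ((MvPolynomial.eval v) (MvPolynomial.C s)) Q
          = (MvPolynomial.eval v) (Q.eval (MvPolynomial.C s)) :=
        Polynomial.eval₂_at_apply (MvPolynomial.eval v) (MvPolynomial.C s)
      rw [MvPolynomial.eval_C] at h1
      rw [← h1, ← Polynomial.eval_map]
      have h2 := MvPolynomial.eval_eq_eval_mv_eval' v s q1
      rw [← hQ] at h2
      rw [← h2]
      have h3 : (Fin.cons s v : Fin 2 → ℝ) = ![s, v 0] := by
        funext i
        refine Fin.cases ?_ (fun j => ?_) i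
        · rfl
        · have : j = 0 := Subsingleton.elim _ _
          subst this
          rfl
      rw [h3]
      exact hs (v 0)
    have := MvPolynomial.funext (p := Q.eval (MvPolynomial.C s)) (q := 0) fun v => by
      rw [key v]; simp
    exact this
  set M : Polynomial (MvPolynomial (Fin 1) ℝ) := Polynomial.X ^ 2 - 1 with hM
  have hMonic : M.Monic := by
    have := Polynomial.monic_X_pow_sub_C (1 : MvPolynomial (Fin 1) ℝ) (two_ne_zero)
    simpa [hM] using this
  have hQ1 : Q.eval 1 = 0 := by
    have := hroot 1 h1
    rwa [map_one] at this
  have hQm1 : Q.eval (-1) = 0 := by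
    have := hroot (-1) hm1
    rwa [show (MvPolynomial.C (-1 : ℝ) : MvPolynomial (Fin 1) ℝ) = -1 by
      rw [map_neg, map_one]] at this
  have hdiv := Polynomial.modByMonic_add_div Q M
  have hMeval1 : M.eval (1 : MvPolynomial (Fin 1) ℝ) = 0 := by simp [hM]
  have hMevalm1 : M.eval (-1 : MvPolynomial (Fin 1) ℝ) = 0 := by simp [hM]
  have hRem1 : (Q %ₘ M).eval 1 = 0 := by
    have := congrArg (Polynomial.eval (1 : MvPolynomial (Fin 1) ℝ)) hdiv
    rw [Polynomial.eval_add, Polynomial.eval_mul, hMeval1, hQ1, zero_mul, add_zero] at this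
    exact this
  have hRemm1 : (Q %ₘ M).eval (-1) = 0 := by
    have := congrArg (Polynomial.eval (-1 : MvPolynomial (Fin 1) ℝ)) hdiv
    rw [Polynomial.eval_add, Polynomial.eval_mul, hMevalm1, hQm1, zero_mul, add_zero] at this
    exact this
  have hRem0 : Q %ₘ M = 0 := by
    by_cases h0 : Q %ₘ M = 0
    · exact h0
    · exfalso
      have hdeg : (Q %ₘ M).degree < M.degree := Polynomial.degree_modByMonic_lt Q hMonic
      have hMdeg : M.degree = 2 := by
        rw [hM, show (1 : Polynomial (MvPolynomial (Fin 1) ℝ)) = Polynomial.C 1 by simp]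
        exact Polynomial.degree_X_pow_sub_C (by norm_num) 1
      have hnd : (Q %ₘ M).natDegree ≤ 1 := by
        have hlt : (Q %ₘ M).degree < ((2 : ℕ) : WithBot ℕ) := by
          rw [hMdeg] at hdeg; exact_mod_cast hdeg
        have := (Polynomial.natDegree_lt_iff_degree_lt h0).mpr hlt
        omega
      have hform := Polynomial.eq_X_add_C_of_natDegree_le_one hnd
      set r1 := (Q %ₘ M).coeff 1
      set r0 := (Q %ₘ M).coeff 0
      rw [hform] at hRem1 hRemm1
      simp only [Polynomial.eval_add, Polynomial.eval_mul, Polynomial.eval_C,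
        Polynomial.eval_X] at hRem1 hRemm1
      have htwo : (2 : MvPolynomial (Fin 1) ℝ) ≠ 0 := by
        intro h
        have := congrArg (MvPolynomial.eval (fun _ => (0 : ℝ))) h
        simp [map_ofNat] at this
      have hr0 : r0 = 0 := by
        have h2 : (2 : MvPolynomial (Fin 1) ℝ) * r0 = 0 := by linear_combination hRem1 + hRemm1
        rcases mul_eq_zero.mp h2 with h | h
        · exact absurd h htwo
        · exact h
      have hr1 : r1 = 0 := by
        have h2 : (2 : MvPolynomial (Fin 1) ℝ) * r1 = 0 := by linear_combination hRem1 - hRemm1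
        rcases mul_eq_zero.mp h2 with h | h
        · exact absurd h htwo
        · exact h
      apply h0
      rw [hform, hr0, hr1]
      simp
  rw [hRem0, zero_add] at hdiv
  refine ⟨-((finSuccEquiv ℝ 1).symm (Q /ₘ M)), ?_⟩
  apply (finSuccEquiv ℝ 1).injective
  rw [map_mul, map_neg, AlgEquiv.apply_symm_apply, map_sub, map_one, map_pow,
    MvPolynomial.finSuccEquiv_X_zero, ← hQ]
  conv_lhs => rw [← hdiv]
  rw [hM]
  ring

/-- main -/
theorem bdfm_first_component_factorization (k : ℕ) (hk : 1 ≤ k)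
    (q1 : MvPolynomial (Fin 2) ℝ) (hq1 : memH1 k q1)
    (hedgeV : ∀ s : ℝ, s = 1 ∨ s = -1 → ∀ j < k,
      (∫ η in (-1 : ℝ)..1, ev2 q1 s η * η ^ j) = 0) :
    ∃ (g : MvPolynomial (Fin 2) ℝ) (c b : ℝ),
      (g = 0 ∨ g.totalDegree + 2 ≤ k) ∧
      ∀ ξ η : ℝ, ev2 q1 ξ η =
        (1 - ξ ^ 2) * (ev2 g ξ η + c * Jac (k - 1) ξ + b * Leg (k - 1) η) := by
  obtain ⟨p, a, b, ⟨hp, hpy⟩, hq⟩ := hq1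
  have h1 : ∀ t, ev2 q1 1 t = 0 :=
    edge_slice_zero k hk q1 p a b hp hpy hq 1 (hedgeV 1 (Or.inl rfl))
  have hm1 : ∀ t, ev2 q1 (-1) t = 0 :=
    edge_slice_zero k hk q1 p a b hp hpy hq (-1) (hedgeV (-1) (Or.inr rfl))
  obtain ⟨r, hfact⟩ := factor_out q1 h1 hm1
  -- coefficient description of q1
  have hcq : ∀ m : Fin 2 →₀ ℕ, coeff m q1 = coeff m p
      + (if Finsupp.single 0 (k + 1) = m then a else 0)
      + (if Finsupp.single 0 2 + Finsupp.single 1 (k - 1) = m then b else 0) := by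
    intro m
    rw [hq, coeff_add, coeff_add]
    congr 1
    · congr 1
      rw [MvPolynomial.C_mul_X_pow_eq_monomial, MvPolynomial.coeff_monomial]
    · have he : MvPolynomial.C b * (X (0 : Fin 2) : MvPolynomial (Fin 2) ℝ) ^ 2 * X 1 ^ (k - 1)
          = monomial (Finsupp.single 0 2 + Finsupp.single 1 (k - 1)) b := by
        rw [MvPolynomial.C_mul_X_pow_eq_monomial, MvPolynomial.X_pow_eq_monomial,
          MvPolynomial.monomial_mul, mul_one]
      rw [he, MvPolynomial.coeff_monomial]
  have happ0 : ∀ m : Fin 2 →₀ ℕ, (m + Finsupp.single 0 2 : Fin 2 →₀ ℕ) 0 = m 0 + 2 := by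
    intro m; simp
  have happ1 : ∀ m : Fin 2 →₀ ℕ, (m + Finsupp.single 0 2 : Fin 2 →₀ ℕ) 1 = m 1 := by
    intro m; simp [Finsupp.single_apply]
  have hs0app : ∀ n : ℕ, (Finsupp.single (0 : Fin 2) n) 0 = n ∧ (Finsupp.single (0 : Fin 2) n) 1 = 0 := by
    intro n; constructor <;> simp [Finsupp.single_apply]
  have hs1app : ∀ n : ℕ, (Finsupp.single (1 : Fin 2) n) 0 = 0 ∧ (Finsupp.single (1 : Fin 2) n) 1 = n := by
    intro n; constructor <;> simp [Finsupp.single_apply]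
  -- total degree of q1
  have htdq : ∀ m : Fin 2 →₀ ℕ, k + 1 < m 0 + m 1 → coeff m q1 = 0 := by
    intro m hm
    rw [hcq m]
    rw [coeff_zero_of_deg_gt (by omega), if_neg, if_neg]
    · ring
    · intro h
      rw [← h] at hm
      have e0 : (Finsupp.single (0 : Fin 2) 2 + Finsupp.single 1 (k - 1) : Fin 2 →₀ ℕ) 0 = 2 := by
        simp [Finsupp.single_apply]
      have e1 : (Finsupp.single (0 : Fin 2) 2 + Finsupp.single 1 (k - 1) : Fin 2 →₀ ℕ) 1 = k - 1 := by
        simp [Finsupp.single_apply]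
      rw [e0, e1] at hm
      omega
    · intro h
      rw [← h] at hm
      rw [(hs0app (k + 1)).1, (hs0app (k + 1)).2] at hm
      omega
  -- key coefficient relation
  have hck : ∀ m : Fin 2 →₀ ℕ, coeff (m + Finsupp.single 0 2) q1
      = coeff (m + Finsupp.single 0 2) r - coeff m r := by
    intro m
    rw [hfact]
    exact keycoeff r m
  have hstep : ∀ m : Fin 2 →₀ ℕ, k ≤ m 0 + m 1 →
      coeff m r = coeff (m + Finsupp.single 0 2) r := by
    intro m hm
    have h := hck m
    rw [htdq _ (by rw [happ0, happ1]; omega)] at h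
    linarith
  have hiter : ∀ n : ℕ, ∀ m : Fin 2 →₀ ℕ, k ≤ m 0 + m 1 →
      coeff m r = coeff (m + Finsupp.single 0 (2 * n)) r := by
    intro n
    induction n with
    | zero => intro m hm; simp
    | succ n ih =>
      intro m hm
      have e0 : (m + Finsupp.single 0 (2 * n) : Fin 2 →₀ ℕ) 0 = m 0 + 2 * n := by simp
      have e1 : (m + Finsupp.single 0 (2 * n) : Fin 2 →₀ ℕ) 1 = m 1 := by
        simp [Finsupp.single_apply]
      rw [ih m hm, hstep (m + Finsupp.single 0 (2 * n)) (by rw [e0, e1]; omega), add_assoc,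
        ← Finsupp.single_add, show 2 * n + 2 = 2 * (n + 1) by ring]
  have hhigh : ∀ m : Fin 2 →₀ ℕ, k ≤ m 0 + m 1 → coeff m r = 0 := by
    intro m hm
    rw [hiter (r.totalDegree + 1) m hm]
    refine coeff_zero_of_deg_gt ?_
    have e0 : (m + Finsupp.single 0 (2 * (r.totalDegree + 1)) : Fin 2 →₀ ℕ) 0
        = m 0 + 2 * (r.totalDegree + 1) := by simp
    have e1 : (m + Finsupp.single 0 (2 * (r.totalDegree + 1)) : Fin 2 →₀ ℕ) 1 = m 1 := by
      simp [Finsupp.single_apply]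
    rw [e0, e1]
    omega
  -- coefficients of r in degree k-1
  have hk1c : ∀ m : Fin 2 →₀ ℕ, m 0 + m 1 = k - 1 →
      coeff m r = -(if Finsupp.single 0 (k - 1) = m then a else 0)
        - (if Finsupp.single 1 (k - 1) = m then b else 0) := by
    intro m hm
    have h := hck m
    have hz : coeff (m + Finsupp.single 0 2) r = 0 := by
      refine hhigh _ ?_
      rw [happ0, happ1]; omega
    rw [hz, hcq (m + Finsupp.single 0 2)] at h
    have hzp : coeff (m + Finsupp.single 0 2) p = 0 := by
      refine coeff_zero_of_deg_gt ?_
      rw [happ0, happ1]; omega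
    rw [hzp] at h
    have hiff1 : (Finsupp.single (0 : Fin 2) (k + 1) = m + Finsupp.single 0 2)
        ↔ (Finsupp.single (0 : Fin 2) (k - 1) = m) := by
      constructor
      · intro hh
        have : Finsupp.single (0 : Fin 2) (k - 1) + Finsupp.single 0 2
            = m + Finsupp.single 0 2 := by
          rw [← Finsupp.single_add, show k - 1 + 2 = k + 1 by omega, hh]
        exact add_right_cancel this
      · intro hh
        rw [← hh, ← Finsupp.single_add]
        congr 1
        omega
    have hiff2 : (Finsupp.single (0 : Fin 2) 2 + Finsupp.single 1 (k - 1) = m + Finsupp.single 0 2)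
        ↔ (Finsupp.single (1 : Fin 2) (k - 1) = m) := by
      constructor
      · intro hh
        rw [add_comm] at hh
        exact add_right_cancel hh
      · intro hh
        rw [← hh, add_comm]
    simp only [hiff1, hiff2] at h
    linarith
  -- case split on k
  rcases eq_or_lt_of_le hk with hk1 | hk2
  · -- k = 1
    have hk1' : k = 1 := hk1.symm
    subst hk1'
    have hr : r = MvPolynomial.C (coeff 0 r) := by
      apply MvPolynomial.ext
      intro m
      rw [MvPolynomial.coeff_C]
      by_cases hm : (0 : Fin 2 →₀ ℕ) = m
      · rw [if_pos hm, ← hm]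
      · rw [if_neg hm]
        refine hhigh m ?_
        by_contra hc
        push_neg at hc
        apply hm
        ext i
        have hi : i = 0 ∨ i = 1 := by
          rcases i with ⟨iv, hiv⟩
          interval_cases iv
          · left; rfl
          · right; rfl
        rcases hi with rfl | rfl <;> simp <;> omega
    refine ⟨0, coeff 0 r, 0, Or.inl rfl, fun ξ η => ?_⟩
    have hJ1 : Jac (1 - 1) ξ = 1 := by
      rw [show (1 : ℕ) - 1 = 0 from rfl, Jac_zero]
    rw [hJ1]
    show MvPolynomial.eval ![ξ, η] q1 = _
    rw [hfact, map_mul, map_sub, map_one, map_pow, MvPolynomial.eval_X, Matrix.cons_val_zero]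
    have hre : MvPolynomial.eval ![ξ, η] r = coeff 0 r := by
      conv_lhs => rw [hr]
      rw [MvPolynomial.eval_C]
    rw [hre, show ev2 0 ξ η = 0 from by simp [ev2]]
    ring
  · -- 2 ≤ k
    set l := k - 1 with hl
    have hl1 : 1 ≤ l := by omega
    have hsne : Finsupp.single (0 : Fin 2) l ≠ Finsupp.single (1 : Fin 2) l := by
      intro h
      have := congrArg (fun f => (f : Fin 2 →₀ ℕ) 0) h
      rw [(hs0app l).1, (hs1app l).1] at this
      omega
    have hcar : coeff (Finsupp.single 0 l) r = -a := by
      rw [hk1c (Finsupp.single 0 l) (by rw [(hs0app l).1, (hs0app l).2]; omega)]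
      rw [if_pos rfl, if_neg (fun h => hsne h.symm)]
      ring
    have hcbr : coeff (Finsupp.single 1 l) r = -b := by
      rw [hk1c (Finsupp.single 1 l) (by rw [(hs1app l).1, (hs1app l).2]; omega)]
      rw [if_neg hsne, if_pos rfl]
      ring
    set cJ := (JacP l).coeff l with hcJ
    set cL := (LegP l).coeff l with hcL
    have hcJne : cJ ≠ 0 := ne_of_gt (JacP_coeff_pos l)
    have hcLne : cL ≠ 0 := LegP_coeff_ne l
    set c : ℝ := -a / cJ with hc
    set b1 : ℝ := -b / cL with hb1
    set g : MvPolynomial (Fin 2) ℝ :=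
      r - MvPolynomial.C c * emb 0 (JacP l) - MvPolynomial.C b1 * emb 1 (LegP l) with hg
    have hembz : ∀ (i : Fin 2) (P : Polynomial ℝ), P.natDegree ≤ l →
        ∀ m : Fin 2 →₀ ℕ, l < m 0 + m 1 → coeff m (emb i P) = 0 := by
      intro i P hP m hm
      rw [emb_coeff]
      split_ifs with hme
      · refine Polynomial.coeff_eq_zero_of_natDegree_lt ?_
        have hi : i = 0 ∨ i = 1 := by
          rcases i with ⟨iv, hiv⟩
          interval_cases iv
          · left; rfl
          · right; rfl
        have : m 0 + m 1 = m i := by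
          rcases hi with rfl | rfl
          · have h1 : m 1 = 0 := by rw [hme]; exact (hs0app (m 0)).2
            omega
          · have h0 : m 0 = 0 := by rw [hme]; exact (hs1app (m 1)).1
            omega
        omega
      · rfl
    have hgz : ∀ m : Fin 2 →₀ ℕ, k - 2 < m 0 + m 1 → coeff m g = 0 := by
      intro m hm
      rw [hg, coeff_sub, coeff_sub, coeff_C_mul, coeff_C_mul]
      rcases lt_or_ge (m 0 + m 1) k with hlt | hge
      · -- degree exactly l = k-1
        have hdeg : m 0 + m 1 = l := by omega
        have hrc := hk1c m (by omega)
        by_cases hm0 : Finsupp.single (0 : Fin 2) l = m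
        · have hm0i : m 0 = l := by rw [← hm0, (hs0app l).1]
          have hm1i : m 1 = 0 := by rw [← hm0, (hs0app l).2]
          have hJ : coeff m (emb 0 (JacP l)) = cJ := by
            rw [emb_coeff, hm0i, if_pos hm0.symm, hcJ]
          have hL : coeff m (emb 1 (LegP l)) = 0 := by
            rw [emb_coeff, hm1i]
            rw [if_neg]
            intro h
            rw [Finsupp.single_zero] at h
            have := Finsupp.single_eq_zero.mp (hm0.trans h)
            omega
          rw [hrc, if_pos hm0, if_neg (fun h => hsne (h.trans hm0.symm).symm), hJ, hL, hc]
          field_simp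
          ring
        · by_cases hm1 : Finsupp.single (1 : Fin 2) l = m
          · have hm0i : m 0 = 0 := by rw [← hm1, (hs1app l).1]
            have hm1i : m 1 = l := by rw [← hm1, (hs1app l).2]
            have hL : coeff m (emb 1 (LegP l)) = cL := by
              rw [emb_coeff, hm1i, if_pos hm1.symm, hcL]
            have hJ : coeff m (emb 0 (JacP l)) = 0 := by
              rw [emb_coeff, hm0i]
              rw [if_neg]
              intro h
              rw [Finsupp.single_zero] at h
              have := Finsupp.single_eq_zero.mp (hm1.trans h)
              omega
            rw [hrc, if_neg hm0, if_pos hm1, hJ, hL, hb1]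
            field_simp
            ring
          · have hJ : coeff m (emb 0 (JacP l)) = 0 := by
              rw [emb_coeff]
              rw [if_neg]
              intro h
              apply hm0
              have h1z : m 1 = 0 := by rw [h, (hs0app (m 0)).2]
              have : m 0 = l := by omega
              rw [h, this]
            have hL : coeff m (emb 1 (LegP l)) = 0 := by
              rw [emb_coeff]
              rw [if_neg]
              intro h
              apply hm1
              have h0z : m 0 = 0 := by rw [h, (hs1app (m 1)).1]
              have : m 1 = l := by omega
              rw [h, this]
            rw [hrc, if_neg hm0, if_neg hm1, hJ, hL]
            ring
      · -- degree at least k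
        rw [hhigh m hge, hembz 0 (JacP l) (JacP_natDegree_le l) m (by omega),
          hembz 1 (LegP l) (LegP_natDegree_le l) m (by omega)]
        ring
    refine ⟨g, c, b1, Or.inr ?_, fun ξ η => ?_⟩
    · have := totalDegree_le_of_coeff hgz
      omega
    · rw [hfact]
      show MvPolynomial.eval ![ξ, η] _ = _
      rw [map_mul, map_sub, map_one, map_pow, MvPolynomial.eval_X]
      have hgev : MvPolynomial.eval ![ξ, η] r
          = MvPolynomial.eval ![ξ, η] g + c * Jac l ξ + b1 * Leg l η := by
        rw [hg, map_sub, map_sub, map_mul, map_mul, MvPolynomial.eval_C, MvPolynomial.eval_C,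
          emb_eval, emb_eval]
        have h0 : (![ξ, η] : Fin 2 → ℝ) 0 = ξ := rfl
        have h1 : (![ξ, η] : Fin 2 → ℝ) 1 = η := rfl
        rw [h0, h1, JacP_eval, LegP_eval]
        ring
      show (1 - ξ ^ 2) * MvPolynomial.eval ![ξ, η] r
          = (1 - ξ ^ 2) * (ev2 g ξ η + c * Jac (k - 1) ξ + b1 * Leg (k - 1) η)
      rw [hgev]
      rfl
end

section
/- Let k ≥ 1 and let K be a rectangle [a,a+h]×[b,b+h]. For any v₁ ∈ P_{k-1}(K) ⊕ span{x^k, x y^{k-1}} there exist unique v_{x}¹ ∈ P_{k-2}(K) ⊕ span{x^{k-1}, y^{k-1}} and v_{y}¹ ∈ span{1, y, ..., y^{k-1}} such that v₁ = (x - (a+h)) v_{x}¹ + v_{y}¹. -/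
open MvPolynomial

private noncomputable def Qc (c0 : ℝ) (i : ℕ) : MvPolynomial (Fin 2) ℝ :=
  ∑ l ∈ Finset.range i, X 0 ^ l * C c0 ^ (i - 1 - l)

private lemma geomQ (c0 : ℝ) (i : ℕ) :
    (X 0 - C c0) * Qc c0 i = (X (R := ℝ) (σ := Fin 2) 0) ^ i - C c0 ^ i := by
  have := geom_sum₂_mul (X (R := ℝ) (σ := Fin 2) 0) (C c0) i
  unfold Qc
  linear_combination this

private lemma div_p (c0 : ℝ) (p : MvPolynomial (Fin 2) ℝ) :
    p = (X 0 - C c0) * (∑ m ∈ p.support, C (coeff m p) * Qc c0 (m 0) * X 1 ^ (m 1))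
        + ∑ m ∈ p.support, C (coeff m p) * C c0 ^ (m 0) * X 1 ^ (m 1) := by
  conv_lhs => rw [p.as_sum]
  rw [Finset.mul_sum, ← Finset.sum_add_distrib]
  refine Finset.sum_congr rfl fun m _ => ?_
  rw [monomial_eq, Finsupp.prod_pow, Fin.prod_univ_two]
  linear_combination (-(C (coeff m p) * X (1 : Fin 2) ^ (m 1))) * geomQ c0 (m 0)

private lemma uniq_key (c0 : ℝ) (g : MvPolynomial (Fin 2) ℝ) (n : ℕ) (u : ℕ → ℝ)
    (H : (X 0 - C c0) * g = ∑ j ∈ Finset.range n, C (u j) * X 1 ^ j) : g = 0 := by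
  have e := congrArg (finSuccEquiv ℝ 1) H
  simp only [map_mul, map_sub, map_sum, map_pow, finSuccEquiv_X_zero] at e
  have hC : finSuccEquiv ℝ 1 (C c0) = Polynomial.C (C c0) := by
    simp [finSuccEquiv_apply]
  have hX1 : finSuccEquiv ℝ 1 (X 1) = Polynomial.C (X 0) := by
    have : (1 : Fin 2) = Fin.succ 0 := rfl
    rw [this, finSuccEquiv_X_succ]
  have hCu : ∀ j, finSuccEquiv ℝ 1 (C (u j)) = Polynomial.C (C (u j)) := fun j => by
    simp [finSuccEquiv_apply]
  rw [hC, hX1] at e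
  simp only [hCu, ← Polynomial.C_pow, ← map_mul, ← map_sum] at e
  by_contra hg
  have hg' : finSuccEquiv ℝ 1 g ≠ 0 := by
    simpa using (map_ne_zero_iff _ (finSuccEquiv ℝ 1).injective).2 hg
  have h1 : ((Polynomial.X - Polynomial.C (C c0 : MvPolynomial (Fin 1) ℝ)) *
      finSuccEquiv ℝ 1 g).natDegree = 1 + (finSuccEquiv ℝ 1 g).natDegree := by
    rw [Polynomial.natDegree_mul (Polynomial.X_sub_C_ne_zero _) hg',
      Polynomial.natDegree_X_sub_C]
  rw [e, Polynomial.natDegree_C] at h1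
  omega

private lemma sum_deg (c0 : ℝ) (n : ℕ) (e : ℕ → ℕ) :
    (∑ l ∈ Finset.range n, (X 0 : MvPolynomial (Fin 2) ℝ) ^ l * C c0 ^ e l).totalDegree
      ≤ n - 1 := by
  refine (totalDegree_finset_sum _ _).trans (Finset.sup_le fun l hl => ?_)
  refine (totalDegree_mul _ _).trans ?_
  have h1 : ((X 0 : MvPolynomial (Fin 2) ℝ) ^ l).totalDegree = l := totalDegree_X_pow _ _
  have h2 : ((C c0 : MvPolynomial (Fin 2) ℝ) ^ e l).totalDegree = 0 := by
    rw [← map_pow]; exact totalDegree_C _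
  rw [h1, h2]
  simp only [Finset.mem_range] at hl
  omega

/-- Unique decomposition `v₁ = (x - (a+h)) v_x¹ + v_y¹` of an element
`v₁ ∈ P_{k-1}(K) ⊕ span{x^k, x y^{k-1}}` on the rectangle `K = [a,a+h] × [b,b+h]`, with
`v_x¹ ∈ P_{k-2}(K) ⊕ span{x^{k-1}, y^{k-1}}` and `v_y¹ ∈ span{1, y, …, y^{k-1}}`
(variable `0` is `x`, variable `1` is `y`). -/
theorem displacement_decomposition (k : ℕ) (hk : 1 ≤ k) (a b h : ℝ) (hh : 0 < h)
    (v1 : MvPolynomial (Fin 2) ℝ)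
    (hv1 : ∃ p : MvPolynomial (Fin 2) ℝ, ∃ c d : ℝ, p.totalDegree ≤ k - 1 ∧
      v1 = p + MvPolynomial.C c * X 0 ^ k + MvPolynomial.C d * X 0 * X 1 ^ (k - 1)) :
    ∃! w : MvPolynomial (Fin 2) ℝ × MvPolynomial (Fin 2) ℝ,
      (∃ p : MvPolynomial (Fin 2) ℝ, ∃ c d : ℝ, (p = 0 ∨ p.totalDegree + 2 ≤ k) ∧
        w.1 = p + MvPolynomial.C c * X 0 ^ (k - 1) + MvPolynomial.C d * X 1 ^ (k - 1)) ∧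
      (∃ u : ℕ → ℝ, w.2 = ∑ j ∈ Finset.range k, MvPolynomial.C (u j) * X 1 ^ j) ∧
      v1 = (X 0 - MvPolynomial.C (a + h)) * w.1 + w.2 := by
  obtain ⟨p, c, d, hpd, hv⟩ := hv1
  set c0 : ℝ := a + h with hc0
  -- basic monomial-degree fact
  have hdeg : ∀ m ∈ p.support, m 0 + m 1 ≤ k - 1 := by
    intro m hm
    have h1 := le_totalDegree hm
    have h2 : (m.sum fun _ e => e) = m 0 + m 1 := by
      rw [Finsupp.sum_fintype _ _ (fun _ => rfl), Fin.sum_univ_two]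
    omega
  set qp : MvPolynomial (Fin 2) ℝ :=
    ∑ m ∈ p.support, C (coeff m p) * Qc c0 (m 0) * X 1 ^ (m 1) with hqp
  set rp : MvPolynomial (Fin 2) ℝ :=
    ∑ m ∈ p.support, C (coeff m p) * C c0 ^ (m 0) * X 1 ^ (m 1) with hrp
  set G : MvPolynomial (Fin 2) ℝ :=
    ∑ l ∈ Finset.range (k - 1), X 0 ^ l * C c0 ^ (k - 1 - l) with hG
  set p' : MvPolynomial (Fin 2) ℝ := qp + C c * G with hp'
  set w1 : MvPolynomial (Fin 2) ℝ := p' + C c * X 0 ^ (k - 1) + C d * X 1 ^ (k - 1) with hw1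
  set u : ℕ → ℝ := fun j =>
    (∑ m ∈ p.support.filter (fun m => m 1 = j), coeff m p * c0 ^ (m 0)) +
    (if j = 0 then c * c0 ^ k else 0) + (if j = k - 1 then d * c0 else 0) with hu
  set w2 : MvPolynomial (Fin 2) ℝ := rp + C (c * c0 ^ k) + C (d * c0) * X 1 ^ (k - 1) with hw2
  -- splitting of the geometric quotient
  have hsplit : Qc c0 k = G + X 0 ^ (k - 1) := by
    unfold Qc
    have hk' : k = (k - 1) + 1 := by omega
    rw [hk', Finset.sum_range_succ]
    have : (k - 1 + 1) - 1 - (k - 1) = 0 := by omega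
    rw [this, pow_zero, mul_one, hG]
    congr 2 <;> omega
  -- degree condition on p'
  have h1 : p' = 0 ∨ p'.totalDegree + 2 ≤ k := by
    rcases Nat.lt_or_ge k 2 with hk2 | hk2
    · left
      have hk1 : k = 1 := by omega
      have hqp0 : qp = 0 := by
        rw [hqp]
        refine Finset.sum_eq_zero fun m hm => ?_
        have := hdeg m hm
        have hm0 : m 0 = 0 := by omega
        rw [hm0]
        simp [Qc]
      have hG0 : G = 0 := by
        rw [hG, hk1]
        simp
      rw [hp', hqp0, hG0, mul_zero, add_zero]
    · right
      have hqpd : qp.totalDegree ≤ k - 2 := by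
        rw [hqp]
        refine (totalDegree_finset_sum _ _).trans (Finset.sup_le fun m hm => ?_)
        rcases Nat.eq_zero_or_pos (m 0) with hm0 | hm0
        · rw [hm0]
          simp [Qc]
        · refine (totalDegree_mul _ _).trans ?_
          have h2 : ((X 1 : MvPolynomial (Fin 2) ℝ) ^ (m 1)).totalDegree = m 1 :=
            totalDegree_X_pow _ _
          have h3 : (C (coeff m p) * Qc c0 (m 0)).totalDegree ≤ m 0 - 1 := by
            refine (totalDegree_mul _ _).trans ?_
            rw [totalDegree_C]
            rw [zero_add]; exact sum_deg c0 (m 0) _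
          have h4 := hdeg m hm
          rw [h2]
          omega
      have hGd : (C c * G).totalDegree ≤ k - 2 := by
        refine (totalDegree_mul _ _).trans ?_
        rw [totalDegree_C, hG]
        rw [zero_add]; exact (sum_deg c0 (k - 1) _).trans (by omega)
      have := (totalDegree_add qp (C c * G)).trans (max_le hqpd hGd)
      rw [← hp'] at this
      omega
  -- w2 in span of powers of y
  have hmaps : ∀ m ∈ p.support, m 1 ∈ Finset.range k := by
    intro m hm
    have := hdeg m hm
    exact Finset.mem_range.2 (by omega)
  have hrpj : rp = ∑ j ∈ Finset.range k,
      C (∑ m ∈ p.support.filter (fun m => m 1 = j), coeff m p * c0 ^ (m 0)) * X 1 ^ j := by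
    rw [hrp, ← Finset.sum_fiberwise_of_maps_to hmaps
      (fun m => C (coeff m p) * C c0 ^ (m 0) * X 1 ^ (m 1))]
    refine Finset.sum_congr rfl fun j _ => ?_
    rw [map_sum, Finset.sum_mul]
    refine Finset.sum_congr rfl fun m hm => ?_
    rw [Finset.mem_filter] at hm
    rw [map_mul, map_pow, hm.2]
  have hB : (∑ j ∈ Finset.range k, C (if j = 0 then c * c0 ^ k else 0) * X 1 ^ j :
      MvPolynomial (Fin 2) ℝ) = C (c * c0 ^ k) := by
    rw [Finset.sum_eq_single_of_mem 0 (Finset.mem_range.2 hk)]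
    · simp
    · intro j _ hj
      simp [hj]
  have hD : (∑ j ∈ Finset.range k, C (if j = k - 1 then d * c0 else 0) * X 1 ^ j :
      MvPolynomial (Fin 2) ℝ) = C (d * c0) * X 1 ^ (k - 1) := by
    rw [Finset.sum_eq_single_of_mem (k - 1) (Finset.mem_range.2 (by omega))]
    · simp
    · intro j _ hj
      simp [hj]
  have huw2 : w2 = ∑ j ∈ Finset.range k, C (u j) * X 1 ^ j := by
    rw [hw2, hu]
    simp only [map_add, add_mul, Finset.sum_add_distrib, hB, hD, ← hrpj]
  -- the decomposition identity
  have hmain : v1 = (X 0 - C c0) * w1 + w2 := by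
    have Hp := div_p c0 p
    rw [← hqp, ← hrp] at Hp
    have HQ := geomQ c0 k
    rw [hsplit] at HQ
    have hc : (C (c * c0 ^ k) : MvPolynomial (Fin 2) ℝ) = C c * C c0 ^ k := by
      rw [map_mul, map_pow]
    have hd : (C (d * c0) : MvPolynomial (Fin 2) ℝ) = C d * C c0 := by
      rw [map_mul]
    have hX0k : (X 0 : MvPolynomial (Fin 2) ℝ) ^ k = X 0 * X 0 ^ (k - 1) := by
      rw [← pow_succ']
      congr 1
      omega
    rw [hX0k] at HQ
    rw [hv, hw1, hw2, hp', hc, hd, hX0k]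
    linear_combination Hp - C c * HQ
  refine ⟨(w1, w2), ⟨⟨p', c, d, h1, rfl⟩, ⟨u, huw2⟩, hmain⟩, ?_⟩
  rintro ⟨y1, y2⟩ ⟨-, ⟨u', hy2⟩, hyv⟩
  dsimp only at hy2 hyv
  have hkey : (X 0 - C c0) * (y1 - w1) = ∑ j ∈ Finset.range k, C (u j - u' j) * X 1 ^ j := by
    have hsub : (X 0 - C c0) * (y1 - w1) = w2 - y2 := by
      linear_combination -(hmain.symm.trans hyv)
    rw [hsub, huw2, hy2, ← Finset.sum_sub_distrib]
    refine Finset.sum_congr rfl fun j _ => ?_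
    rw [map_sub, sub_mul]
  have hy1w : y1 - w1 = 0 := uniq_key c0 _ k _ hkey
  have hy1 : y1 = w1 := sub_eq_zero.mp hy1w
  have hy2w : y2 = w2 := by
    have h5 := hmain.symm.trans hyv
    rw [hy1] at h5
    exact (add_left_cancel h5).symm
  exact Prod.ext hy1 hy2w
end

section
/- For k = 1 on a 2×2 macroelement M, the kernel N_M = {v ∈ V₁(M) : (div τ, v)_{L²(Ω_M)} = 0 for all τ ∈ Σ_{1,0}(M)} equals span{(1,0)ᵀ, (0,1)ᵀ, ε_{y,-x}}, where ε_{y,-x} is the piecewise constant field equal to (-1,1)ᵀ on K₁, (-1,-1)ᵀ on K₂, (1,-1)ᵀ on K₃, and (1,1)ᵀ on K₄. -/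
open intervalIntegral MvPolynomial

/-- The serendipity space of order `k`: `S_k = P_k + span{x^k y, x y^k}`. -/
def memS (k : ℕ) (q : MvPolynomial (Fin 2) ℝ) : Prop :=
  ∃ p : MvPolynomial (Fin 2) ℝ, ∃ a b : ℝ, p.totalDegree ≤ k ∧
    q = p + MvPolynomial.C a * X 0 ^ k * X 1 + MvPolynomial.C b * X 0 * X 1 ^ k

/-- Local displacement space
`V_k(K) = (P_{k-1})² ⊕ span{(x^k,0),(0,y^k),(xy^{k-1},0),(0,x^{k-1}y)}`. -/
def memVk (k : ℕ) (q1 q2 : MvPolynomial (Fin 2) ℝ) : Prop :=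
  ∃ p1 p2 : MvPolynomial (Fin 2) ℝ, ∃ a b c d : ℝ,
    p1.totalDegree ≤ k - 1 ∧ p2.totalDegree ≤ k - 1 ∧
    q1 = p1 + MvPolynomial.C a * X 0 ^ k + MvPolynomial.C b * X 0 * X 1 ^ (k - 1) ∧
    q2 = p2 + MvPolynomial.C c * X 1 ^ k + MvPolynomial.C d * X 0 ^ (k - 1) * X 1

/-- Partial derivative in the first variable. -/
noncomputable def Dx (f : ℝ → ℝ → ℝ) (x y : ℝ) : ℝ := deriv (fun t => f t y) x

/-- Partial derivative in the second variable. -/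
noncomputable def Dy (f : ℝ → ℝ → ℝ) (x y : ℝ) : ℝ := deriv (fun t => f x t) y

/-- The `i`-th open subinterval (`i = 0, 1`) of `(-h, h)` in the 2×2 macroelement of squares
of side `h`. -/
def IxM (h : ℝ) (i : Fin 2) : Set ℝ := Set.Ioo (((i : ℕ) : ℝ) * h - h) (((i : ℕ) : ℝ) * h)

/-- The macroelement stress space `Σ_{k,0}(M)` on the macroelement
`Ω_M = (-h,h)²` of four squares of side `h`: elementwise enriched-BDFM normal stress and
serendipity shear stress, `H(div)`-conformity, and vanishing normal trace `τν = 0` on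
`∂Ω_M`. -/
def macroSigma0 (k : ℕ) (h : ℝ) (t11 t12 t22 : ℝ → ℝ → ℝ) : Prop :=
  (∀ i j : Fin 2, ∃ q1 q2 q12 : MvPolynomial (Fin 2) ℝ,
    memH1 k q1 ∧ memH2 k q2 ∧ memS k q12 ∧
    ∀ x ∈ IxM h i, ∀ y ∈ IxM h j,
      t11 x y = ev2 q1 x y ∧ t22 x y = ev2 q2 x y ∧ t12 x y = ev2 q12 x y) ∧
  (∀ y ∈ Set.Ioo (-h) h, y ≠ 0 → ContinuousOn (fun x => t11 x y) (Set.Icc (-h) h)) ∧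
  (∀ x ∈ Set.Ioo (-h) h, x ≠ 0 → ContinuousOn (fun y => t22 x y) (Set.Icc (-h) h)) ∧
  ContinuousOn (fun z : ℝ × ℝ => t12 z.1 z.2) (Set.Icc (-h) h ×ˢ Set.Icc (-h) h) ∧
  (∀ y ∈ Set.Ioo (-h) h, y ≠ 0 → t11 (-h) y = 0 ∧ t11 h y = 0) ∧
  (∀ x ∈ Set.Ioo (-h) h, x ≠ 0 → t22 x (-h) = 0 ∧ t22 x h = 0) ∧
  (∀ z ∈ frontier (Set.Ioo (-h) h ×ˢ Set.Ioo (-h) h), t12 z.1 z.2 = 0)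

/-- The macroelement displacement space `V_k(M)`. -/
def macroVk (k : ℕ) (h : ℝ) (v1 v2 : ℝ → ℝ → ℝ) : Prop :=
  ∀ i j : Fin 2, ∃ q1 q2 : MvPolynomial (Fin 2) ℝ, memVk k q1 q2 ∧
    ∀ x ∈ IxM h i, ∀ y ∈ IxM h j, v1 x y = ev2 q1 x y ∧ v2 x y = ev2 q2 x y

/-- Sum over the four elements of the macroelement of the elementwise iterated integrals. -/
noncomputable def iiM (h : ℝ) (f : ℝ → ℝ → ℝ) : ℝ :=
  ∑ i : Fin 2, ∑ j : Fin 2,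
    ∫ x in (((i : ℕ) : ℝ) * h - h)..(((i : ℕ) : ℝ) * h),
      ∫ y in (((j : ℕ) : ℝ) * h - h)..(((j : ℕ) : ℝ) * h), f x y

/-- `v` is `L²(Ω_M)`-orthogonal to the rigid motions `RM = span{(1,0),(0,1),(y,-x)}`. -/
def rmPerp (h : ℝ) (v1 v2 : ℝ → ℝ → ℝ) : Prop :=
  iiM h (fun x y => v1 x y) = 0 ∧ iiM h (fun x y => v2 x y) = 0 ∧
    iiM h (fun x y => y * v1 x y - x * v2 x y) = 0

/-- Sign pattern of the piecewise-constant surrogate `ε_{y,-x}` of the rotation `(y,-x)`: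
its first component is `-1` on the two lower squares and `1` on the two upper squares. -/
def eps1 (j : Fin 2) : ℝ := if j = 0 then -1 else 1

/-- Second component of `ε_{y,-x}`: `1` on the two left squares and `-1` on the two right
squares. -/
def eps2 (i : Fin 2) : ℝ := if i = 0 then 1 else -1


/-! ### Auxiliary lemmas -/

section Aux

open MeasureTheory Set

lemma int_congr_Ioo {a b : ℝ} (hab : a ≤ b) {f g : ℝ → ℝ}
    (h : ∀ x ∈ Set.Ioo a b, f x = g x) :
    ∫ x in a..b, f x = ∫ x in a..b, g x := by
  apply intervalIntegral.integral_congr_ae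
  have h1 : ∀ᵐ (x : ℝ), x ≠ b := by
    have : (volume : Measure ℝ) {b} = 0 := measure_singleton b
    filter_upwards [measure_eq_zero_iff_ae_notMem.mp this] with x hx
    simpa using hx
  filter_upwards [h1] with x hx hmem
  rw [Set.uIoc_of_le hab] at hmem
  exact h x ⟨hmem.1, lt_of_le_of_ne hmem.2 hx⟩

lemma ipoly {a b : ℝ} (p q r : ℝ) :
    ∫ x in a..b, (p + q*x + r*x^2) =
      p*(b-a) + q*(b^2-a^2)/2 + r*(b^3-a^3)/3 := by
  have : ∀ x : ℝ, HasDerivAt (fun t => p*t + q*t^2/2 + r*t^3/3) (p + q*x + r*x^2) x := by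
    intro x
    have h1 : HasDerivAt (fun t : ℝ => p*t) p x := by
      simpa using (hasDerivAt_id x).const_mul p
    have h2 : HasDerivAt (fun t : ℝ => q*t^2/2) (q*x) x := by
      have := (hasDerivAt_pow 2 x).const_mul (q/2)
      rw [show (fun t : ℝ => q*t^2/2) = fun y => q/2*y^2 from by ext t; ring]
      exact this.congr_deriv (by norm_num; ring)
    have h3 : HasDerivAt (fun t : ℝ => r*t^3/3) (r*x^2) x := by
      have := (hasDerivAt_pow 3 x).const_mul (r/3)
      rw [show (fun t : ℝ => r*t^3/3) = fun y => r/3*y^3 from by ext t; ring]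
      exact this.congr_deriv (by norm_num; ring)
    exact (h1.add h2).add h3
  rw [intervalIntegral.integral_eq_sub_of_hasDerivAt (fun x _ => this x)]
  · ring
  · apply Continuous.intervalIntegrable; continuity

lemma deriv_affine (p q : ℝ) (x : ℝ) : deriv (fun t => p + q * t) x = q := by
  have : HasDerivAt (fun t : ℝ => p + q * t) q x := by
    simpa using ((hasDerivAt_id x).const_mul q).const_add p
  exact this.deriv

lemma deriv_quad (p q r : ℝ) (x : ℝ) : deriv (fun t => p + q * t + r * t^2) x = q + 2*r*x := by
  have : HasDerivAt (fun t : ℝ => p + q * t + r * t^2) (q + 2*r*x) x := by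
    have h2 : HasDerivAt (fun t : ℝ => r * t^2) (2*r*x) x := by
      have := (hasDerivAt_pow 2 x).const_mul r
      exact this.congr_deriv (by norm_num; ring)
    exact ((((hasDerivAt_id x).const_mul q).const_add p).add h2).congr_deriv (by simp)
  exact this.deriv

lemma deriv_bilin_y (c0 c1 c2 c3 x y : ℝ) :
    deriv (fun t => c0 + c1*x + c2*t + c3*(x*t)) y = c2 + c3*x := by
  have : (fun t => c0 + c1*x + c2*t + c3*(x*t)) = fun t => (c0 + c1*x) + (c2 + c3*x) * t :=
    funext fun t => by ring
  rw [this, deriv_affine]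

lemma deriv_bilin_x (c0 c1 c2 c3 x y : ℝ) :
    deriv (fun t => c0 + c1*t + c2*y + c3*(t*y)) x = c1 + c3*y := by
  have : (fun t => c0 + c1*t + c2*y + c3*(t*y)) = fun t => (c0 + c2*y) + (c1 + c3*y) * t :=
    funext fun t => by ring
  rw [this, deriv_affine]

lemma deriv_eq_of_eqOn_Ioo {a b x : ℝ} (hx : x ∈ Set.Ioo a b) {f g : ℝ → ℝ}
    (h : ∀ t ∈ Set.Ioo a b, f t = g t) : deriv f x = deriv g x := by
  apply Filter.EventuallyEq.deriv_eq
  filter_upwards [isOpen_Ioo.mem_nhds hx] with t ht using h t ht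

lemma val_of_eqOn_Ioo {a b c : ℝ} {S : Set ℝ} (hsub : Set.Ioo a b ⊆ S) (hcS : c ∈ S)
    {f g : ℝ → ℝ} (hf : ContinuousOn f S) (hg : Continuous g)
    (heq : ∀ x ∈ Set.Ioo a b, f x = g x) (hcl : c ∈ closure (Set.Ioo a b)) :
    f c = g c := by
  have hne : (nhdsWithin c (Set.Ioo a b)).NeBot := mem_closure_iff_nhdsWithin_neBot.mp hcl
  have h1 : Filter.Tendsto f (nhdsWithin c (Set.Ioo a b)) (nhds (f c)) :=
    ((hf c hcS).mono hsub).tendsto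
  have h2 : Filter.Tendsto f (nhdsWithin c (Set.Ioo a b)) (nhds (g c)) := by
    have hgt : Filter.Tendsto g (nhdsWithin c (Set.Ioo a b)) (nhds (g c)) :=
      (hg.tendsto c).mono_left nhdsWithin_le_nhds
    apply hgt.congr'
    filter_upwards [self_mem_nhdsWithin] with x hx using (heq x hx).symm
  exact tendsto_nhds_unique h1 h2

lemma val2_of_eqOn {x0 x1 y0 y1 : ℝ} {S : Set (ℝ × ℝ)}
    (hsub : Set.Ioo x0 x1 ×ˢ Set.Ioo y0 y1 ⊆ S) {c : ℝ × ℝ} (hcS : c ∈ S)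
    {f g : ℝ × ℝ → ℝ} (hf : ContinuousOn f S) (hg : Continuous g)
    (heq : ∀ z ∈ Set.Ioo x0 x1 ×ˢ Set.Ioo y0 y1, f z = g z)
    (hcl : c ∈ closure (Set.Ioo x0 x1 ×ˢ Set.Ioo y0 y1)) : f c = g c := by
  have hne : (nhdsWithin c (Set.Ioo x0 x1 ×ˢ Set.Ioo y0 y1)).NeBot :=
    mem_closure_iff_nhdsWithin_neBot.mp hcl
  have h1 : Filter.Tendsto f (nhdsWithin c (Set.Ioo x0 x1 ×ˢ Set.Ioo y0 y1)) (nhds (f c)) :=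
    ((hf c hcS).mono hsub).tendsto
  have h2 : Filter.Tendsto f (nhdsWithin c (Set.Ioo x0 x1 ×ˢ Set.Ioo y0 y1)) (nhds (g c)) := by
    have hgt : Filter.Tendsto g (nhdsWithin c (Set.Ioo x0 x1 ×ˢ Set.Ioo y0 y1)) (nhds (g c)) :=
      (hg.tendsto c).mono_left nhdsWithin_le_nhds
    apply hgt.congr'
    filter_upwards [self_mem_nhdsWithin] with x hx using (heq x hx).symm
  exact tendsto_nhds_unique h1 h2

lemma deg1_support {p : MvPolynomial (Fin 2) ℝ} (hp : p.totalDegree ≤ 1)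
    {d : Fin 2 →₀ ℕ} (hd : d ∈ p.support) :
    d = 0 ∨ d = Finsupp.single 0 1 ∨ d = Finsupp.single 1 1 := by
  have hdeg : d.sum (fun _ e => e) ≤ 1 := le_trans (MvPolynomial.le_totalDegree hd) hp
  have hsum : d 0 + d 1 ≤ 1 := by
    have := Finsupp.sum_fintype d (fun _ e => e) (fun _ => rfl)
    rw [this] at hdeg
    simpa [Fin.sum_univ_two] using hdeg
  have h0 : d 0 = 0 ∨ d 0 = 1 := by omega
  have h1 : d 1 = 0 ∨ d 1 = 1 := by omega
  rcases h0 with h0 | h0 <;> rcases h1 with h1 | h1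
  · left; ext i; fin_cases i <;> simp [h0, h1]
  · right; right; ext i; fin_cases i <;> simp [h0, h1, Finsupp.single_apply]
  · right; left; ext i; fin_cases i <;> simp [h0, h1, Finsupp.single_apply]
  · omega

lemma eval_deg1 {p : MvPolynomial (Fin 2) ℝ} (hp : p.totalDegree ≤ 1) (x y : ℝ) :
    ev2 p x y = MvPolynomial.coeff 0 p + MvPolynomial.coeff (Finsupp.single 0 1) p * x
      + MvPolynomial.coeff (Finsupp.single 1 1) p * y := by
  have hs : p.support ⊆ ({0, Finsupp.single 0 1, Finsupp.single 1 1} : Finset (Fin 2 →₀ ℕ)) := by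
    intro d hd
    rcases deg1_support hp hd with h | h | h <;> simp [h]
  rw [ev2, MvPolynomial.eval_eq]
  rw [Finset.sum_subset hs]
  · have h01 : (0 : Fin 2 →₀ ℕ) ≠ Finsupp.single 0 1 := by
      intro h; have := DFunLike.congr_fun h 0; simp at this
    have h02 : (0 : Fin 2 →₀ ℕ) ≠ Finsupp.single 1 1 := by
      intro h; have := DFunLike.congr_fun h 1; simp at this
    have h12 : (Finsupp.single 0 1 : Fin 2 →₀ ℕ) ≠ Finsupp.single 1 1 := by
      intro h; have := DFunLike.congr_fun h 0; simp [Finsupp.single_apply] at this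
    rw [Finset.sum_insert (by simp [h01, h02]), Finset.sum_insert (by simp [h12]),
      Finset.sum_singleton]
    simp [Fin.prod_univ_two, Finsupp.single_apply]; ring
  · intro d _ hd
    rw [MvPolynomial.notMem_support_iff.mp hd]
    ring

lemma H1_eval {q : MvPolynomial (Fin 2) ℝ} (hq : memH1 1 q) :
    ∃ c0 c1 c2 : ℝ, ∀ x y : ℝ, ev2 q x y = c0 + c1*x + c2*x^2 := by
  obtain ⟨p, a, b, ⟨hdeg, hcoef⟩, rfl⟩ := hq
  refine ⟨MvPolynomial.coeff 0 p, MvPolynomial.coeff (Finsupp.single 0 1) p, a + b,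
    fun x y => ?_⟩
  have hev : ev2 p x y = MvPolynomial.coeff 0 p + MvPolynomial.coeff (Finsupp.single 0 1) p * x := by
    rw [eval_deg1 hdeg, hcoef]; ring
  simp only [ev2, map_add, map_mul, map_pow, MvPolynomial.eval_C, MvPolynomial.eval_X] at *
  rw [hev]
  norm_num
  ring

lemma H2_eval {q : MvPolynomial (Fin 2) ℝ} (hq : memH2 1 q) :
    ∃ c0 c1 c2 : ℝ, ∀ x y : ℝ, ev2 q x y = c0 + c1*y + c2*y^2 := by
  obtain ⟨p, a, b, ⟨hdeg, hcoef⟩, rfl⟩ := hq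
  refine ⟨MvPolynomial.coeff 0 p, MvPolynomial.coeff (Finsupp.single 1 1) p, a + b,
    fun x y => ?_⟩
  have hev : ev2 p x y = MvPolynomial.coeff 0 p + MvPolynomial.coeff (Finsupp.single 1 1) p * y := by
    rw [eval_deg1 hdeg, hcoef]; ring
  simp only [ev2, map_add, map_mul, map_pow, MvPolynomial.eval_C, MvPolynomial.eval_X] at *
  rw [hev]
  norm_num
  ring

lemma S_eval {q : MvPolynomial (Fin 2) ℝ} (hq : memS 1 q) :
    ∃ c0 c1 c2 c3 : ℝ, ∀ x y : ℝ, ev2 q x y = c0 + c1*x + c2*y + c3*(x*y) := by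
  obtain ⟨p, a, b, hdeg, rfl⟩ := hq
  refine ⟨MvPolynomial.coeff 0 p, MvPolynomial.coeff (Finsupp.single 0 1) p,
    MvPolynomial.coeff (Finsupp.single 1 1) p, a + b, fun x y => ?_⟩
  have hev := eval_deg1 hdeg x y
  simp only [ev2, map_add, map_mul, map_pow, MvPolynomial.eval_C, MvPolynomial.eval_X] at *
  rw [hev]
  norm_num
  ring

lemma td_aff (a b c : ℝ) :
    (MvPolynomial.C a + MvPolynomial.C b * X 0 + MvPolynomial.C c * X 1 :
      MvPolynomial (Fin 2) ℝ).totalDegree ≤ 1 := by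
  apply le_trans (MvPolynomial.totalDegree_add _ _)
  apply max_le
  · apply le_trans (MvPolynomial.totalDegree_add _ _)
    apply max_le
    · simp [MvPolynomial.totalDegree_C]
    · apply le_trans (MvPolynomial.totalDegree_mul _ _)
      simp [MvPolynomial.totalDegree_C, MvPolynomial.totalDegree_X]
  · apply le_trans (MvPolynomial.totalDegree_mul _ _)
    simp [MvPolynomial.totalDegree_C, MvPolynomial.totalDegree_X]

lemma coeff_aff_01 (a b c : ℝ) :
    MvPolynomial.coeff (Finsupp.single 1 1)
      (MvPolynomial.C a + MvPolynomial.C b * X 0 + MvPolynomial.C c * X 1 :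
        MvPolynomial (Fin 2) ℝ) = c := by
  have h1 : (Finsupp.single 1 1 : Fin 2 →₀ ℕ) ≠ 0 := by
    intro h; have := DFunLike.congr_fun h 1; simp at this
  have h2 : (Finsupp.single 1 1 : Fin 2 →₀ ℕ) ≠ Finsupp.single 0 1 := by
    intro h; have := DFunLike.congr_fun h 1; simp [Finsupp.single_apply] at this
  simp [MvPolynomial.coeff_add, MvPolynomial.coeff_C, MvPolynomial.coeff_C_mul,
    MvPolynomial.coeff_X', h1, h2, Ne.symm h1, Ne.symm h2]

lemma coeff_aff_10 (a b c : ℝ) :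
    MvPolynomial.coeff (Finsupp.single 0 1)
      (MvPolynomial.C a + MvPolynomial.C b * X 0 + MvPolynomial.C c * X 1 :
        MvPolynomial (Fin 2) ℝ) = b := by
  have h1 : (Finsupp.single 0 1 : Fin 2 →₀ ℕ) ≠ 0 := by
    intro h; have := DFunLike.congr_fun h 0; simp at this
  have h2 : (Finsupp.single 0 1 : Fin 2 →₀ ℕ) ≠ Finsupp.single 1 1 := by
    intro h; have := DFunLike.congr_fun h 0; simp [Finsupp.single_apply] at this
  simp [MvPolynomial.coeff_add, MvPolynomial.coeff_C, MvPolynomial.coeff_C_mul,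
    MvPolynomial.coeff_X', h1, h2, Ne.symm h1, Ne.symm h2]

lemma memH1_quadx (c0 c1 c2 : ℝ) :
    memH1 1 (MvPolynomial.C c0 + MvPolynomial.C c1 * X 0 + MvPolynomial.C c2 * X 0^2) := by
  refine ⟨MvPolynomial.C c0 + MvPolynomial.C c1 * X 0 + MvPolynomial.C 0 * X 1, c2, 0,
    ⟨?_, ?_⟩, by simp only [map_zero, zero_mul, mul_zero, add_zero]; try ring⟩
  · exact td_aff c0 c1 0
  · simpa using coeff_aff_01 c0 c1 0

lemma memH2_quady (c0 c1 c2 : ℝ) :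
    memH2 1 (MvPolynomial.C c0 + MvPolynomial.C c1 * X 1 + MvPolynomial.C c2 * X 1^2) := by
  refine ⟨MvPolynomial.C c0 + MvPolynomial.C 0 * X 0 + MvPolynomial.C c1 * X 1, c2, 0,
    ⟨?_, ?_⟩, by simp only [map_zero, zero_mul, mul_zero, add_zero]; try ring⟩
  · exact td_aff c0 0 c1
  · simpa using coeff_aff_10 c0 0 c1

lemma memS_bilin (c0 c1 c2 c3 : ℝ) :
    memS 1 (MvPolynomial.C c0 + MvPolynomial.C c1 * X 0 + MvPolynomial.C c2 * X 1
      + MvPolynomial.C c3 * (X 0 * X 1)) := by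
  exact ⟨MvPolynomial.C c0 + MvPolynomial.C c1 * X 0 + MvPolynomial.C c2 * X 1, c3, 0,
    td_aff c0 c1 c2, by simp only [map_zero, zero_mul, mul_zero, add_zero]; try ring⟩

lemma memH1_zero : memH1 1 0 := by
  have := memH1_quadx 0 0 0
  simpa using this

lemma memH2_zero : memH2 1 0 := by
  have := memH2_quady 0 0 0
  simpa using this

lemma memS_zero : memS 1 0 := by
  have := memS_bilin 0 0 0 0
  simpa using this

lemma ev2_quadx (c0 c1 c2 x y : ℝ) :
    ev2 (MvPolynomial.C c0 + MvPolynomial.C c1 * X 0 + MvPolynomial.C c2 * X 0^2) x y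
      = c0 + c1*x + c2*x^2 := by
  simp [ev2]

lemma ev2_quady (c0 c1 c2 x y : ℝ) :
    ev2 (MvPolynomial.C c0 + MvPolynomial.C c1 * X 1 + MvPolynomial.C c2 * X 1^2) x y
      = c0 + c1*y + c2*y^2 := by
  simp [ev2]

lemma ev2_bilin (c0 c1 c2 c3 x y : ℝ) :
    ev2 (MvPolynomial.C c0 + MvPolynomial.C c1 * X 0 + MvPolynomial.C c2 * X 1
      + MvPolynomial.C c3 * (X 0 * X 1)) x y = c0 + c1*x + c2*y + c3*(x*y) := by
  simp [ev2]

lemma ev2_zero (x y : ℝ) : ev2 0 x y = 0 := by simp [ev2]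

lemma IxM0 (h : ℝ) : IxM h 0 = Set.Ioo (-h) 0 := by
  simp [IxM]

lemma IxM1 (h : ℝ) : IxM h 1 = Set.Ioo 0 h := by
  norm_num [IxM]

lemma iiM_expand (h : ℝ) (f : ℝ → ℝ → ℝ) : iiM h f =
    (((∫ x in (-h)..0, ∫ y in (-h)..0, f x y) + ∫ x in (-h)..0, ∫ y in (0:ℝ)..h, f x y) +
      ∫ x in (0:ℝ)..h, ∫ y in (-h)..0, f x y) + ∫ x in (0:ℝ)..h, ∫ y in (0:ℝ)..h, f x y := by
  rw [iiM, Fin.sum_univ_two]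
  norm_num
  ring

lemma ii2_congr {x0 x1 y0 y1 : ℝ} (hx : x0 ≤ x1) (hy : y0 ≤ y1) {f : ℝ → ℝ → ℝ}
    {g : ℝ → ℝ → ℝ}
    (h : ∀ x ∈ Set.Ioo x0 x1, ∀ y ∈ Set.Ioo y0 y1, f x y = g x y) :
    ∫ x in x0..x1, ∫ y in y0..y1, f x y = ∫ x in x0..x1, ∫ y in y0..y1, g x y := by
  apply int_congr_Ioo hx
  intro x hx'
  exact int_congr_Ioo hy (fun y hy' => h x hx' y hy')

lemma elem_int (x0 x1 y0 y1 P0 P1 P2 Q0 Q1 Q2 : ℝ) :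
    (∫ x in x0..x1, ∫ y in y0..y1, ((P0 + P1*x + P2*x^2) + (Q0 + Q1*y + Q2*y^2))) =
    (y1-y0)*(P0*(x1-x0) + P1*(x1^2-x0^2)/2 + P2*(x1^3-x0^3)/3)
      + (x1-x0)*(Q0*(y1-y0) + Q1*(y1^2-y0^2)/2 + Q2*(y1^3-y0^3)/3) := by
  have hinner : ∀ x : ℝ, (∫ y in y0..y1, ((P0 + P1*x + P2*x^2) + (Q0 + Q1*y + Q2*y^2)))
      = ((P0 + P1*x + P2*x^2)*(y1-y0) + Q0*(y1-y0) + Q1*(y1^2-y0^2)/2 + Q2*(y1^3-y0^3)/3) := by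
    intro x
    have hfn : ∀ y : ℝ, ((P0 + P1*x + P2*x^2) + (Q0 + Q1*y + Q2*y^2))
        = ((P0 + P1*x + P2*x^2 + Q0) + Q1*y + Q2*y^2) := fun y => by ring
    rw [show (fun y => ((P0 + P1*x + P2*x^2) + (Q0 + Q1*y + Q2*y^2)))
        = (fun y => ((P0 + P1*x + P2*x^2 + Q0) + Q1*y + Q2*y^2)) from funext hfn]
    rw [ipoly]
    ring
  rw [show (fun x => ∫ y in y0..y1, ((P0 + P1*x + P2*x^2) + (Q0 + Q1*y + Q2*y^2)))
      = (fun x => ((P0*(y1-y0) + Q0*(y1-y0) + Q1*(y1^2-y0^2)/2 + Q2*(y1^3-y0^3)/3)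
          + (P1*(y1-y0))*x + (P2*(y1-y0))*x^2)) from funext (fun x => by rw [hinner]; ring)]
  rw [ipoly]
  ring

lemma cont_quad (a b c : ℝ) : Continuous (fun x : ℝ => a + b*x + c*x^2) := by
  continuity

lemma cont_bilin (a b c d : ℝ) :
    Continuous (fun z : ℝ × ℝ => a + b*z.1 + c*z.2 + d*(z.1*z.2)) := by
  continuity

lemma fin2_cases (j : Fin 2) : j = 0 ∨ j = 1 := by omega

lemma IxM_disjoint {h : ℝ} {j j' : Fin 2} (hne : j' ≠ j) {y : ℝ} (hy : y ∈ IxM h j') :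
    y ∉ IxM h j := by
  intro hc
  rcases fin2_cases j' with rfl | rfl <;> rcases fin2_cases j with rfl | rfl
  · exact hne rfl
  · rw [IxM0] at hy; rw [IxM1] at hc; linarith [hy.2, hc.1]
  · rw [IxM1] at hy; rw [IxM0] at hc; linarith [hy.1, hc.2]
  · exact hne rfl

lemma D0 (x y : ℝ) : Dx (fun _ _ => (0:ℝ)) x y = 0 ∧ Dy (fun _ _ => (0:ℝ)) x y = 0 := by
  constructor <;> simp [Dx, Dy]

lemma key_row (h : ℝ) (hh : 0 < h) (v1 v2 : ℝ → ℝ → ℝ)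
    (hK : ∀ t11 t12 t22 : ℝ → ℝ → ℝ, macroSigma0 1 h t11 t12 t22 →
      iiM h (fun x y => (Dx t11 x y + Dy t12 x y) * v1 x y +
        (Dx t12 x y + Dy t22 x y) * v2 x y) = 0)
    (j : Fin 2) (A B : Fin 2 → ℝ)
    (hv1 : ∀ i : Fin 2, ∀ x ∈ IxM h i, ∀ y ∈ IxM h j, v1 x y = A i + B i * x)
    (f : ℝ → ℝ) (hfc : Continuous f) (hbl : f (-h) = 0) (hbr : f h = 0)
    (PL0 PL1 PL2 PR0 PR1 PR2 : ℝ)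
    (hfL : ∀ x ∈ Set.Ioo (-h) 0, f x = PL0 + PL1*x + PL2*x^2)
    (hfR : ∀ x ∈ Set.Ioo 0 h, f x = PR0 + PR1*x + PR2*x^2) :
    h^2*( PL1*(A 0) - PL1*(B 0)*h/2 - PL2*(A 0)*h + 2*PL2*(B 0)*h^2/3
      + PR1*(A 1) + PR1*(B 1)*h/2 + PR2*(A 1)*h + 2*PR2*(B 1)*h^2/3 ) = 0 := by
  classical
  have hmh : -h < 0 := by linarith
  have hmh' : (-h : ℝ) ≤ 0 := le_of_lt hmh
  have h0h : (0:ℝ) ≤ h := le_of_lt hh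
  set t11 : ℝ → ℝ → ℝ := fun x y => if y ∈ IxM h j then f x else 0 with ht11
  have hσ : macroSigma0 1 h t11 (fun _ _ => 0) (fun _ _ => 0) := by
    refine ⟨?_, ?_, ?_, continuousOn_const, ?_, by simp, by simp⟩
    · intro i j'
      by_cases hj : j' = j
      · subst hj
        refine ⟨if i = 0 then (MvPolynomial.C PL0 + MvPolynomial.C PL1 * X 0
            + MvPolynomial.C PL2 * X 0^2) else (MvPolynomial.C PR0 + MvPolynomial.C PR1 * X 0
            + MvPolynomial.C PR2 * X 0^2), 0, 0, ?_, memH2_zero, memS_zero, ?_⟩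
        · by_cases hi : i = 0 <;> simp [hi, memH1_quadx]
        · intro x hx y hy
          refine ⟨?_, by simp [ev2_zero], by simp [ev2_zero]⟩
          have ht : t11 x y = f x := by rw [ht11]; exact if_pos hy
          rw [ht]
          rcases fin2_cases i with rfl | rfl
          · rw [IxM0] at hx
            rw [if_pos rfl, ev2_quadx]
            exact hfL x hx
          · rw [IxM1] at hx
            rw [if_neg (by norm_num), ev2_quadx]
            exact hfR x hx
      · refine ⟨0, 0, 0, memH1_zero, memH2_zero, memS_zero, ?_⟩
        intro x hx y hy
        refine ⟨?_, by simp [ev2_zero], by simp [ev2_zero]⟩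
        rw [ev2_zero, ht11]
        exact if_neg (IxM_disjoint hj hy)
    · intro y hy hy0
      by_cases hyj : y ∈ IxM h j
      · simp only [ht11, if_pos hyj]
        exact hfc.continuousOn
      · simp only [ht11, if_neg hyj]
        exact continuousOn_const
    · intro x hx hx0
      exact continuousOn_const
    · intro y hy hy0
      constructor <;> by_cases hyj : y ∈ IxM h j <;> simp [ht11, hyj, hbl, hbr]
  have hval := hK t11 (fun _ _ => 0) (fun _ _ => 0) hσ
  have hDxL : ∀ x ∈ Set.Ioo (-h) 0, ∀ y ∈ IxM h j, Dx t11 x y = PL1 + 2*PL2*x := by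
    intro x hx y hy
    have h1 : (fun t => t11 t y) = f := funext fun t => by rw [ht11]; exact if_pos hy
    rw [Dx, h1, deriv_eq_of_eqOn_Ioo hx
      (g := fun t => PL0 + PL1*t + PL2*t^2) (fun t ht => hfL t ht), deriv_quad]
  have hDxR : ∀ x ∈ Set.Ioo 0 h, ∀ y ∈ IxM h j, Dx t11 x y = PR1 + 2*PR2*x := by
    intro x hx y hy
    have h1 : (fun t => t11 t y) = f := funext fun t => by rw [ht11]; exact if_pos hy
    rw [Dx, h1, deriv_eq_of_eqOn_Ioo hx
      (g := fun t => PR0 + PR1*t + PR2*t^2) (fun t ht => hfR t ht), deriv_quad]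
  have hDx0 : ∀ (x y : ℝ), y ∉ IxM h j → Dx t11 x y = 0 := by
    intro x y hy
    have h1 : (fun t => t11 t y) = fun _ => 0 := funext fun t => by rw [ht11]; exact if_neg hy
    rw [Dx, h1, deriv_const]
  rw [iiM_expand] at hval
  rcases fin2_cases j with rfl | rfl
  · -- j = 0 : row is (-h, 0)
    rw [ii2_congr hmh' hmh' (g := fun x y => ((PL1*(A 0) + (PL1*(B 0) + 2*PL2*(A 0))*x
        + (2*PL2*(B 0))*x^2) + ((0:ℝ) + 0*y + 0*y^2)))
      (fun x hx y hy => by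
        rw [(D0 x y).1, (D0 x y).2, hDxL x hx y (by rw [IxM0]; exact hy),
          hv1 0 x (by rw [IxM0]; exact hx) y (by rw [IxM0]; exact hy)]
        ring),
      ii2_congr hmh' h0h (g := fun x y => (((0:ℝ) + 0*x + 0*x^2) + ((0:ℝ) + 0*y + 0*y^2)))
      (fun x hx y hy => by
        rw [(D0 x y).1, (D0 x y).2, hDx0 x y (by
          rw [IxM0]; exact fun hc => absurd hy.1 (not_lt.mpr (le_of_lt hc.2)))]
        ring),
      ii2_congr h0h hmh' (g := fun x y => ((PR1*(A 1) + (PR1*(B 1) + 2*PR2*(A 1))*x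
        + (2*PR2*(B 1))*x^2) + ((0:ℝ) + 0*y + 0*y^2)))
      (fun x hx y hy => by
        rw [(D0 x y).1, (D0 x y).2, hDxR x hx y (by rw [IxM0]; exact hy),
          hv1 1 x (by rw [IxM1]; exact hx) y (by rw [IxM0]; exact hy)]
        ring),
      ii2_congr h0h h0h (g := fun x y => (((0:ℝ) + 0*x + 0*x^2) + ((0:ℝ) + 0*y + 0*y^2)))
      (fun x hx y hy => by
        rw [(D0 x y).1, (D0 x y).2, hDx0 x y (by
          rw [IxM0]; exact fun hc => absurd hy.1 (not_lt.mpr (le_of_lt hc.2)))]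
        ring),
      elem_int, elem_int, elem_int, elem_int] at hval
    linear_combination hval
  · -- j = 1 : row is (0, h)
    rw [ii2_congr hmh' hmh' (g := fun x y => (((0:ℝ) + 0*x + 0*x^2) + ((0:ℝ) + 0*y + 0*y^2)))
      (fun x hx y hy => by
        rw [(D0 x y).1, (D0 x y).2, hDx0 x y (by
          rw [IxM1]; exact fun hc => absurd hy.2 (not_lt.mpr (le_of_lt hc.1)))]
        ring),
      ii2_congr hmh' h0h (g := fun x y => ((PL1*(A 0) + (PL1*(B 0) + 2*PL2*(A 0))*x
        + (2*PL2*(B 0))*x^2) + ((0:ℝ) + 0*y + 0*y^2)))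
      (fun x hx y hy => by
        rw [(D0 x y).1, (D0 x y).2, hDxL x hx y (by rw [IxM1]; exact hy),
          hv1 0 x (by rw [IxM0]; exact hx) y (by rw [IxM1]; exact hy)]
        ring),
      ii2_congr h0h hmh' (g := fun x y => (((0:ℝ) + 0*x + 0*x^2) + ((0:ℝ) + 0*y + 0*y^2)))
      (fun x hx y hy => by
        rw [(D0 x y).1, (D0 x y).2, hDx0 x y (by
          rw [IxM1]; exact fun hc => absurd hy.2 (not_lt.mpr (le_of_lt hc.1)))]
        ring),
      ii2_congr h0h h0h (g := fun x y => ((PR1*(A 1) + (PR1*(B 1) + 2*PR2*(A 1))*x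
        + (2*PR2*(B 1))*x^2) + ((0:ℝ) + 0*y + 0*y^2)))
      (fun x hx y hy => by
        rw [(D0 x y).1, (D0 x y).2, hDxR x hx y (by rw [IxM1]; exact hy),
          hv1 1 x (by rw [IxM1]; exact hx) y (by rw [IxM1]; exact hy)]
        ring),
      elem_int, elem_int, elem_int, elem_int] at hval
    linear_combination hval

lemma key_col (h : ℝ) (hh : 0 < h) (v1 v2 : ℝ → ℝ → ℝ)
    (hK : ∀ t11 t12 t22 : ℝ → ℝ → ℝ, macroSigma0 1 h t11 t12 t22 →
      iiM h (fun x y => (Dx t11 x y + Dy t12 x y) * v1 x y +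
        (Dx t12 x y + Dy t22 x y) * v2 x y) = 0)
    (i : Fin 2) (C D : Fin 2 → ℝ)
    (hv2 : ∀ j : Fin 2, ∀ x ∈ IxM h i, ∀ y ∈ IxM h j, v2 x y = C j + D j * y)
    (f : ℝ → ℝ) (hfc : Continuous f) (hbl : f (-h) = 0) (hbr : f h = 0)
    (QL0 QL1 QL2 QR0 QR1 QR2 : ℝ)
    (hfL : ∀ y ∈ Set.Ioo (-h) 0, f y = QL0 + QL1*y + QL2*y^2)
    (hfR : ∀ y ∈ Set.Ioo 0 h, f y = QR0 + QR1*y + QR2*y^2) :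
    h^2*( QL1*(C 0) - QL1*(D 0)*h/2 - QL2*(C 0)*h + 2*QL2*(D 0)*h^2/3
      + QR1*(C 1) + QR1*(D 1)*h/2 + QR2*(C 1)*h + 2*QR2*(D 1)*h^2/3 ) = 0 := by
  classical
  have hmh : -h < 0 := by linarith
  have hmh' : (-h : ℝ) ≤ 0 := le_of_lt hmh
  have h0h : (0:ℝ) ≤ h := le_of_lt hh
  set t22 : ℝ → ℝ → ℝ := fun x y => if x ∈ IxM h i then f y else 0 with ht22
  have hσ : macroSigma0 1 h (fun _ _ => 0) (fun _ _ => 0) t22 := by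
    refine ⟨?_, ?_, ?_, continuousOn_const, by simp, ?_, by simp⟩
    · intro i' j'
      by_cases hi : i' = i
      · subst hi
        refine ⟨0, if j' = 0 then (MvPolynomial.C QL0 + MvPolynomial.C QL1 * X 1
            + MvPolynomial.C QL2 * X 1^2) else (MvPolynomial.C QR0 + MvPolynomial.C QR1 * X 1
            + MvPolynomial.C QR2 * X 1^2), 0, memH1_zero, ?_, memS_zero, ?_⟩
        · by_cases hj : j' = 0 <;> simp [hj, memH2_quady]
        · intro x hx y hy
          refine ⟨by simp [ev2_zero], ?_, by simp [ev2_zero]⟩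
          have ht : t22 x y = f y := by rw [ht22]; exact if_pos hx
          rw [ht]
          rcases fin2_cases j' with rfl | rfl
          · rw [IxM0] at hy
            rw [if_pos rfl, ev2_quady]
            exact hfL y hy
          · rw [IxM1] at hy
            rw [if_neg (by norm_num), ev2_quady]
            exact hfR y hy
      · refine ⟨0, 0, 0, memH1_zero, memH2_zero, memS_zero, ?_⟩
        intro x hx y hy
        refine ⟨by simp [ev2_zero], ?_, by simp [ev2_zero]⟩
        rw [ev2_zero, ht22]
        exact if_neg (IxM_disjoint hi hx)
    · intro y hy hy0
      exact continuousOn_const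
    · intro x hx hx0
      by_cases hxi : x ∈ IxM h i
      · simp only [ht22, if_pos hxi]
        exact hfc.continuousOn
      · simp only [ht22, if_neg hxi]
        exact continuousOn_const
    · intro x hx hx0
      constructor <;> by_cases hxi : x ∈ IxM h i <;> simp [ht22, hxi, hbl, hbr]
  have hval := hK (fun _ _ => 0) (fun _ _ => 0) t22 hσ
  have hDyL : ∀ (x : ℝ), x ∈ IxM h i → ∀ y ∈ Set.Ioo (-h) 0, Dy t22 x y = QL1 + 2*QL2*y := by
    intro x hx y hy
    have h1 : (fun t => t22 x t) = f := funext fun t => by rw [ht22]; exact if_pos hx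
    rw [Dy, h1, deriv_eq_of_eqOn_Ioo hy
      (g := fun t => QL0 + QL1*t + QL2*t^2) (fun t ht => hfL t ht), deriv_quad]
  have hDyR : ∀ (x : ℝ), x ∈ IxM h i → ∀ y ∈ Set.Ioo 0 h, Dy t22 x y = QR1 + 2*QR2*y := by
    intro x hx y hy
    have h1 : (fun t => t22 x t) = f := funext fun t => by rw [ht22]; exact if_pos hx
    rw [Dy, h1, deriv_eq_of_eqOn_Ioo hy
      (g := fun t => QR0 + QR1*t + QR2*t^2) (fun t ht => hfR t ht), deriv_quad]
  have hDy0 : ∀ (x y : ℝ), x ∉ IxM h i → Dy t22 x y = 0 := by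
    intro x y hx
    have h1 : (fun t => t22 x t) = fun _ => 0 := funext fun t => by rw [ht22]; exact if_neg hx
    rw [Dy, h1, deriv_const]
  rw [iiM_expand] at hval
  rcases fin2_cases i with rfl | rfl
  · -- i = 0 : column is (-h, 0)
    rw [ii2_congr hmh' hmh' (g := fun x y => (((0:ℝ) + 0*x + 0*x^2) + (QL1*(C 0)
        + (QL1*(D 0) + 2*QL2*(C 0))*y + (2*QL2*(D 0))*y^2)))
      (fun x hx y hy => by
        rw [(D0 x y).1, (D0 x y).2, hDyL x (by rw [IxM0]; exact hx) y hy,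
          hv2 0 x (by rw [IxM0]; exact hx) y (by rw [IxM0]; exact hy)]
        ring),
      ii2_congr hmh' h0h (g := fun x y => (((0:ℝ) + 0*x + 0*x^2) + (QR1*(C 1)
        + (QR1*(D 1) + 2*QR2*(C 1))*y + (2*QR2*(D 1))*y^2)))
      (fun x hx y hy => by
        rw [(D0 x y).1, (D0 x y).2, hDyR x (by rw [IxM0]; exact hx) y hy,
          hv2 1 x (by rw [IxM0]; exact hx) y (by rw [IxM1]; exact hy)]
        ring),
      ii2_congr h0h hmh' (g := fun x y => (((0:ℝ) + 0*x + 0*x^2) + ((0:ℝ) + 0*y + 0*y^2)))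
      (fun x hx y hy => by
        rw [(D0 x y).1, (D0 x y).2, hDy0 x y (by
          rw [IxM0]; exact fun hc => absurd hx.1 (not_lt.mpr (le_of_lt hc.2)))]
        ring),
      ii2_congr h0h h0h (g := fun x y => (((0:ℝ) + 0*x + 0*x^2) + ((0:ℝ) + 0*y + 0*y^2)))
      (fun x hx y hy => by
        rw [(D0 x y).1, (D0 x y).2, hDy0 x y (by
          rw [IxM0]; exact fun hc => absurd hx.1 (not_lt.mpr (le_of_lt hc.2)))]
        ring),
      elem_int, elem_int, elem_int, elem_int] at hval
    linear_combination hval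
  · -- i = 1 : column is (0, h)
    rw [ii2_congr hmh' hmh' (g := fun x y => (((0:ℝ) + 0*x + 0*x^2) + ((0:ℝ) + 0*y + 0*y^2)))
      (fun x hx y hy => by
        rw [(D0 x y).1, (D0 x y).2, hDy0 x y (by
          rw [IxM1]; exact fun hc => absurd hx.2 (not_lt.mpr (le_of_lt hc.1)))]
        ring),
      ii2_congr hmh' h0h (g := fun x y => (((0:ℝ) + 0*x + 0*x^2) + ((0:ℝ) + 0*y + 0*y^2)))
      (fun x hx y hy => by
        rw [(D0 x y).1, (D0 x y).2, hDy0 x y (by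
          rw [IxM1]; exact fun hc => absurd hx.2 (not_lt.mpr (le_of_lt hc.1)))]
        ring),
      ii2_congr h0h hmh' (g := fun x y => (((0:ℝ) + 0*x + 0*x^2) + (QL1*(C 0)
        + (QL1*(D 0) + 2*QL2*(C 0))*y + (2*QL2*(D 0))*y^2)))
      (fun x hx y hy => by
        rw [(D0 x y).1, (D0 x y).2, hDyL x (by rw [IxM1]; exact hx) y hy,
          hv2 0 x (by rw [IxM1]; exact hx) y (by rw [IxM0]; exact hy)]
        ring),
      ii2_congr h0h h0h (g := fun x y => (((0:ℝ) + 0*x + 0*x^2) + (QR1*(C 1)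
        + (QR1*(D 1) + 2*QR2*(C 1))*y + (2*QR2*(D 1))*y^2)))
      (fun x hx y hy => by
        rw [(D0 x y).1, (D0 x y).2, hDyR x (by rw [IxM1]; exact hx) y hy,
          hv2 1 x (by rw [IxM1]; exact hx) y (by rw [IxM1]; exact hy)]
        ring),
      elem_int, elem_int, elem_int, elem_int] at hval
    linear_combination hval

lemma key_shear (h : ℝ) (hh : 0 < h) (v1 v2 : ℝ → ℝ → ℝ)
    (hK : ∀ t11 t12 t22 : ℝ → ℝ → ℝ, macroSigma0 1 h t11 t12 t22 →
      iiM h (fun x y => (Dx t11 x y + Dy t12 x y) * v1 x y +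
        (Dx t12 x y + Dy t22 x y) * v2 x y) = 0)
    (A C : Fin 2 → Fin 2 → ℝ)
    (hv1 : ∀ i j : Fin 2, ∀ x ∈ IxM h i, ∀ y ∈ IxM h j, v1 x y = A i j)
    (hv2 : ∀ i j : Fin 2, ∀ x ∈ IxM h i, ∀ y ∈ IxM h j, v2 x y = C i j) :
    (A 0 0 - A 0 1) + (A 1 0 - A 1 1) + (C 0 0 - C 1 0) + (C 0 1 - C 1 1) = 0 := by
  have hmh : -h < 0 := by linarith
  have hmh' : (-h : ℝ) ≤ 0 := le_of_lt hmh
  have h0h : (0:ℝ) ≤ h := le_of_lt hh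
  have hhh : -h < h := by linarith
  set t12 : ℝ → ℝ → ℝ := fun x y => (h - |x|) * (h - |y|) with ht12
  have hσ : macroSigma0 1 h (fun _ _ => 0) t12 (fun _ _ => 0) := by
    refine ⟨?_, ?_, ?_, ?_, by simp, by simp, ?_⟩
    · intro i j
      rcases fin2_cases i with rfl | rfl <;> rcases fin2_cases j with rfl | rfl
      · refine ⟨0, 0, MvPolynomial.C (h*h) + MvPolynomial.C h * X 0 + MvPolynomial.C h * X 1
          + MvPolynomial.C 1 * (X 0 * X 1), memH1_zero, memH2_zero, memS_bilin _ _ _ _, ?_⟩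
        intro x hx y hy
        rw [IxM0] at hx hy
        refine ⟨by simp [ev2_zero], by simp [ev2_zero], ?_⟩
        rw [ev2_bilin, ht12]
        show (h - |x|) * (h - |y|) = _
        rw [abs_of_neg hx.2, abs_of_neg hy.2]
        ring
      · refine ⟨0, 0, MvPolynomial.C (h*h) + MvPolynomial.C h * X 0 + MvPolynomial.C (-h) * X 1
          + MvPolynomial.C (-1) * (X 0 * X 1), memH1_zero, memH2_zero, memS_bilin _ _ _ _, ?_⟩
        intro x hx y hy
        rw [IxM0] at hx
        rw [IxM1] at hy
        refine ⟨by simp [ev2_zero], by simp [ev2_zero], ?_⟩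
        rw [ev2_bilin, ht12]
        show (h - |x|) * (h - |y|) = _
        rw [abs_of_neg hx.2, abs_of_pos hy.1]
        ring
      · refine ⟨0, 0, MvPolynomial.C (h*h) + MvPolynomial.C (-h) * X 0 + MvPolynomial.C h * X 1
          + MvPolynomial.C (-1) * (X 0 * X 1), memH1_zero, memH2_zero, memS_bilin _ _ _ _, ?_⟩
        intro x hx y hy
        rw [IxM1] at hx
        rw [IxM0] at hy
        refine ⟨by simp [ev2_zero], by simp [ev2_zero], ?_⟩
        rw [ev2_bilin, ht12]
        show (h - |x|) * (h - |y|) = _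
        rw [abs_of_pos hx.1, abs_of_neg hy.2]
        ring
      · refine ⟨0, 0, MvPolynomial.C (h*h) + MvPolynomial.C (-h) * X 0 + MvPolynomial.C (-h) * X 1
          + MvPolynomial.C 1 * (X 0 * X 1), memH1_zero, memH2_zero, memS_bilin _ _ _ _, ?_⟩
        intro x hx y hy
        rw [IxM1] at hx hy
        refine ⟨by simp [ev2_zero], by simp [ev2_zero], ?_⟩
        rw [ev2_bilin, ht12]
        show (h - |x|) * (h - |y|) = _
        rw [abs_of_pos hx.1, abs_of_pos hy.1]
        ring
    · intro y hy hy0; exact continuousOn_const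
    · intro x hx hx0; exact continuousOn_const
    · apply Continuous.continuousOn
      simp only [ht12]
      continuity
    · intro z hz
      rw [frontier_prod_eq, frontier_Ioo hhh] at hz
      simp only [ht12]
      show (h - |z.1|) * (h - |z.2|) = 0
      rcases hz with ⟨_, hz2⟩ | ⟨hz1, _⟩
      · simp only [Set.mem_insert_iff, Set.mem_singleton_iff] at hz2
        have h2 : |z.2| = h := by
          rcases hz2 with h2 | h2
          · rw [h2, abs_neg, abs_of_pos hh]
          · rw [h2, abs_of_pos hh]
        rw [h2]; ring
      · simp only [Set.mem_insert_iff, Set.mem_singleton_iff] at hz1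
        have h1 : |z.1| = h := by
          rcases hz1 with h1 | h1
          · rw [h1, abs_neg, abs_of_pos hh]
          · rw [h1, abs_of_pos hh]
        rw [h1]; ring
  have hval := hK (fun _ _ => 0) t12 (fun _ _ => 0) hσ
  have hDxL : ∀ x ∈ Set.Ioo (-h) 0, ∀ y : ℝ, Dx t12 x y = (h - |y|) := by
    intro x hx y
    rw [Dx, deriv_eq_of_eqOn_Ioo hx (g := fun t => h*(h-|y|) + (h-|y|)*t)
      (fun t ht => by rw [ht12]; show (h - |t|) * (h - |y|) = _; rw [abs_of_neg ht.2]; ring), deriv_affine]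
  have hDxR : ∀ x ∈ Set.Ioo 0 h, ∀ y : ℝ, Dx t12 x y = -(h - |y|) := by
    intro x hx y
    rw [Dx, deriv_eq_of_eqOn_Ioo hx (g := fun t => h*(h-|y|) + (-(h-|y|))*t)
      (fun t ht => by rw [ht12]; show (h - |t|) * (h - |y|) = _; rw [abs_of_pos ht.1]; ring), deriv_affine]
  have hDyL : ∀ y ∈ Set.Ioo (-h) 0, ∀ x : ℝ, Dy t12 x y = (h - |x|) := by
    intro y hy x
    rw [Dy, deriv_eq_of_eqOn_Ioo hy (g := fun t => h*(h-|x|) + (h-|x|)*t)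
      (fun t ht => by rw [ht12]; show (h - |x|) * (h - |t|) = _; rw [abs_of_neg ht.2]; ring), deriv_affine]
  have hDyR : ∀ y ∈ Set.Ioo 0 h, ∀ x : ℝ, Dy t12 x y = -(h - |x|) := by
    intro y hy x
    rw [Dy, deriv_eq_of_eqOn_Ioo hy (g := fun t => h*(h-|x|) + (-(h-|x|))*t)
      (fun t ht => by rw [ht12]; show (h - |x|) * (h - |t|) = _; rw [abs_of_pos ht.1]; ring), deriv_affine]
  rw [iiM_expand] at hval
  rw [ii2_congr hmh' hmh' (g := fun x y => ((A 0 0*h + A 0 0*x + 0*x^2)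
      + (C 0 0*h + C 0 0*y + 0*y^2)))
    (fun x hx y hy => by
      rw [(D0 x y).1, (D0 x y).2, hDyL y hy x, hDxL x hx y,
        hv1 0 0 x (by rw [IxM0]; exact hx) y (by rw [IxM0]; exact hy),
        hv2 0 0 x (by rw [IxM0]; exact hx) y (by rw [IxM0]; exact hy),
        abs_of_neg hx.2, abs_of_neg hy.2]
      ring),
    ii2_congr hmh' h0h (g := fun x y => ((-(A 0 1)*h + (-(A 0 1))*x + 0*x^2)
      + (C 0 1*h + (-(C 0 1))*y + 0*y^2)))
    (fun x hx y hy => by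
      rw [(D0 x y).1, (D0 x y).2, hDyR y hy x, hDxL x hx y,
        hv1 0 1 x (by rw [IxM0]; exact hx) y (by rw [IxM1]; exact hy),
        hv2 0 1 x (by rw [IxM0]; exact hx) y (by rw [IxM1]; exact hy),
        abs_of_neg hx.2, abs_of_pos hy.1]
      ring),
    ii2_congr h0h hmh' (g := fun x y => ((A 1 0*h + (-(A 1 0))*x + 0*x^2)
      + (-(C 1 0)*h + (-(C 1 0))*y + 0*y^2)))
    (fun x hx y hy => by
      rw [(D0 x y).1, (D0 x y).2, hDyL y hy x, hDxR x hx y,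
        hv1 1 0 x (by rw [IxM1]; exact hx) y (by rw [IxM0]; exact hy),
        hv2 1 0 x (by rw [IxM1]; exact hx) y (by rw [IxM0]; exact hy),
        abs_of_pos hx.1, abs_of_neg hy.2]
      ring),
    ii2_congr h0h h0h (g := fun x y => ((-(A 1 1)*h + A 1 1*x + 0*x^2)
      + (-(C 1 1)*h + C 1 1*y + 0*y^2)))
    (fun x hx y hy => by
      rw [(D0 x y).1, (D0 x y).2, hDyR y hy x, hDxR x hx y,
        hv1 1 1 x (by rw [IxM1]; exact hx) y (by rw [IxM1]; exact hy),
        hv2 1 1 x (by rw [IxM1]; exact hx) y (by rw [IxM1]; exact hy),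
        abs_of_pos hx.1, abs_of_pos hy.1]
      ring),
    elem_int, elem_int, elem_int, elem_int] at hval
  have h2 : h^3/2 * ((A 0 0 - A 0 1) + (A 1 0 - A 1 1) + (C 0 0 - C 1 0) + (C 0 1 - C 1 1))
      = 0 := by linear_combination hval
  have h3 : (h^3/2 : ℝ) ≠ 0 := by positivity
  exact (mul_eq_zero.mp h2).resolve_left h3

end Aux

set_option maxHeartbeats 1600000 in
/-- Lemma 4.4 (`k = 1`): the kernel
`N_M = {v ∈ V₁(M) : (div τ, v)_{L²(Ω_M)} = 0 ∀ τ ∈ Σ_{1,0}(M)}` equals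
`span{(1,0)ᵀ, (0,1)ᵀ, ε_{y,-x}}`, where `ε_{y,-x}` is the piecewise-constant field equal to
`(-1,1)ᵀ, (-1,-1)ᵀ, (1,-1)ᵀ, (1,1)ᵀ` on the four squares `K₁, …, K₄`. -/
theorem lowest_order_macro_kernel (h : ℝ) (hh : 0 < h) (v1 v2 : ℝ → ℝ → ℝ)
    (hv : ∀ i j : Fin 2, ∃ a b c d : ℝ, ∀ x ∈ IxM h i, ∀ y ∈ IxM h j,
      v1 x y = a + b * x ∧ v2 x y = c + d * y) :
    (∀ t11 t12 t22 : ℝ → ℝ → ℝ, macroSigma0 1 h t11 t12 t22 →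
      iiM h (fun x y => (Dx t11 x y + Dy t12 x y) * v1 x y +
        (Dx t12 x y + Dy t22 x y) * v2 x y) = 0) ↔
    ∃ α β γ : ℝ, ∀ i j : Fin 2, ∀ x ∈ IxM h i, ∀ y ∈ IxM h j,
      v1 x y = α + γ * eps1 j ∧ v2 x y = β + γ * eps2 i := by
  constructor
  · intro hK
    choose A B C D hv' using hv
    have hvv1 : ∀ i j : Fin 2, ∀ x ∈ IxM h i, ∀ y ∈ IxM h j, v1 x y = A i j + B i j * x :=
      fun i j x hx y hy => (hv' i j x hx y hy).1
    have hvv2 : ∀ i j : Fin 2, ∀ x ∈ IxM h i, ∀ y ∈ IxM h j, v2 x y = C i j + D i j * y :=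
      fun i j x hx y hy => (hv' i j x hx y hy).2
    have hmh : -h < 0 := by linarith
    have hne4 : (h^4/6 : ℝ) ≠ 0 := by positivity
    have hne2 : (h^2 : ℝ) ≠ 0 := by positivity
    -- the three test profiles
    have hf0L : ∀ x ∈ Set.Ioo (-h) 0, min x 0 * (min x 0 + h) = 0 + h*x + 1*x^2 := by
      intro x hx; rw [min_eq_left hx.2.le]; ring
    have hf0R : ∀ x ∈ Set.Ioo (0:ℝ) h, min x 0 * (min x 0 + h) = 0 + 0*x + 0*x^2 := by
      intro x hx; rw [min_eq_right hx.1.le]; ring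
    have hf1L : ∀ x ∈ Set.Ioo (-h) 0, max x 0 * (max x 0 - h) = 0 + 0*x + 0*x^2 := by
      intro x hx; rw [max_eq_right hx.2.le]; ring
    have hf1R : ∀ x ∈ Set.Ioo (0:ℝ) h, max x 0 * (max x 0 - h) = 0 + (-h)*x + 1*x^2 := by
      intro x hx; rw [max_eq_left hx.1.le]; ring
    have hfhL : ∀ x ∈ Set.Ioo (-h) 0, h - |x| = h + 1*x + 0*x^2 := by
      intro x hx; rw [abs_of_neg hx.2]; ring
    have hfhR : ∀ x ∈ Set.Ioo (0:ℝ) h, h - |x| = h + (-1)*x + 0*x^2 := by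
      intro x hx; rw [abs_of_pos hx.1]; ring
    have hf0bl : min (-h) 0 * (min (-h) 0 + h) = 0 := by
      rw [min_eq_left (le_of_lt hmh)]; ring
    have hf0br : min h 0 * (min h 0 + h) = 0 := by
      rw [min_eq_right (le_of_lt hh)]; ring
    have hf1bl : max (-h) 0 * (max (-h) 0 - h) = 0 := by
      rw [max_eq_right (le_of_lt hmh)]; ring
    have hf1br : max h 0 * (max h 0 - h) = 0 := by
      rw [max_eq_left (le_of_lt hh)]; ring
    have hfhbl : h - |(-h)| = 0 := by rw [abs_neg, abs_of_pos hh]; ring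
    have hfhbr : h - |h| = 0 := by rw [abs_of_pos hh]; ring
    -- B = 0
    have hB : ∀ i j : Fin 2, B i j = 0 := by
      intro i j
      rcases fin2_cases i with rfl | rfl
      · have hkey := key_row h hh v1 v2 hK j (fun i => A i j) (fun i => B i j)
          (fun i x hx y hy => hvv1 i j x hx y hy)
          (fun x => min x 0 * (min x 0 + h))
          ((continuous_id.min continuous_const).mul
            ((continuous_id.min continuous_const).add continuous_const)) hf0bl hf0br
          0 h 1 0 0 0 hf0L hf0R
        have hz : h^4/6 * B 0 j = 0 := by linear_combination hkey
        exact (mul_eq_zero.mp hz).resolve_left hne4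
      · have hkey := key_row h hh v1 v2 hK j (fun i => A i j) (fun i => B i j)
          (fun i x hx y hy => hvv1 i j x hx y hy)
          (fun x => max x 0 * (max x 0 - h))
          ((continuous_id.max continuous_const).mul
            ((continuous_id.max continuous_const).sub continuous_const)) hf1bl hf1br
          0 0 0 0 (-h) 1 hf1L hf1R
        have hz : h^4/6 * B 1 j = 0 := by linear_combination hkey
        exact (mul_eq_zero.mp hz).resolve_left hne4
    -- D = 0
    have hD : ∀ i j : Fin 2, D i j = 0 := by
      intro i j
      rcases fin2_cases j with rfl | rfl
      · have hkey := key_col h hh v1 v2 hK i (fun j => C i j) (fun j => D i j)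
          (fun j x hx y hy => hvv2 i j x hx y hy)
          (fun y => min y 0 * (min y 0 + h))
          ((continuous_id.min continuous_const).mul
            ((continuous_id.min continuous_const).add continuous_const)) hf0bl hf0br
          0 h 1 0 0 0 hf0L hf0R
        have hz : h^4/6 * D i 0 = 0 := by linear_combination hkey
        exact (mul_eq_zero.mp hz).resolve_left hne4
      · have hkey := key_col h hh v1 v2 hK i (fun j => C i j) (fun j => D i j)
          (fun j x hx y hy => hvv2 i j x hx y hy)
          (fun y => max y 0 * (max y 0 - h))
          ((continuous_id.max continuous_const).mul
            ((continuous_id.max continuous_const).sub continuous_const)) hf1bl hf1br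
          0 0 0 0 (-h) 1 hf1L hf1R
        have hz : h^4/6 * D i 1 = 0 := by linear_combination hkey
        exact (mul_eq_zero.mp hz).resolve_left hne4
    -- A 0 j = A 1 j
    have hA : ∀ j : Fin 2, A 0 j = A 1 j := by
      intro j
      have hkey := key_row h hh v1 v2 hK j (fun i => A i j) (fun i => B i j)
        (fun i x hx y hy => hvv1 i j x hx y hy)
        (fun x => h - |x|) (continuous_const.sub continuous_abs) hfhbl hfhbr
        h 1 0 h (-1) 0 hfhL hfhR
      have hz : h^2 * (A 0 j - A 1 j) = 0 := by
        linear_combination hkey + (h^3/2) * hB 0 j + (h^3/2) * hB 1 j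
      have := (mul_eq_zero.mp hz).resolve_left hne2
      linarith
    -- C i 0 = C i 1
    have hC : ∀ i : Fin 2, C i 0 = C i 1 := by
      intro i
      have hkey := key_col h hh v1 v2 hK i (fun j => C i j) (fun j => D i j)
        (fun j x hx y hy => hvv2 i j x hx y hy)
        (fun y => h - |y|) (continuous_const.sub continuous_abs) hfhbl hfhbr
        h 1 0 h (-1) 0 hfhL hfhR
      have hz : h^2 * (C i 0 - C i 1) = 0 := by
        linear_combination hkey + (h^3/2) * hD i 0 + (h^3/2) * hD i 1
      have := (mul_eq_zero.mp hz).resolve_left hne2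
      linarith
    -- the shear relation
    have hSrel := key_shear h hh v1 v2 hK A C
      (fun i j x hx y hy => by rw [hvv1 i j x hx y hy, hB i j]; ring)
      (fun i j x hx y hy => by rw [hvv2 i j x hx y hy, hD i j]; ring)
    refine ⟨(A 0 0 + A 0 1)/2, (C 0 0 + C 1 0)/2, (A 0 1 - A 0 0)/2, ?_⟩
    intro i j x hx y hy
    have e1 : v1 x y = A i j := by rw [hvv1 i j x hx y hy, hB i j]; ring
    have e2 : v2 x y = C i j := by rw [hvv2 i j x hx y hy, hD i j]; ring
    rw [e1, e2]
    have k1 := hA 0; have k2 := hA 1; have k3 := hC 0; have k4 := hC 1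
    constructor <;>
      (rcases fin2_cases i with rfl | rfl <;> rcases fin2_cases j with rfl | rfl <;>
        simp [eps1, eps2] <;> linarith [hSrel])
  · rintro ⟨α, β, γ, hR⟩
    intro t11 t12 t22 hσ
    obtain ⟨hrep, hc11, hc22, hc12, hb11, hb22, hb12⟩ := hσ
    choose q1 q2 q12 hH1 hH2 hS' hq using hrep
    choose p0 p1 p2 hp using fun i j => H1_eval (hH1 i j)
    choose e0 e1 e2 he using fun i j => H2_eval (hH2 i j)
    choose s0 s1 s2 s3 hs using fun i j => S_eval (hS' i j)
    have hmh : -h < 0 := by linarith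
    have hmh' : (-h:ℝ) ≤ 0 := hmh.le
    have h0h : (0:ℝ) ≤ h := hh.le
    have hhh : -h < h := by linarith
    have he10 : eps1 0 = -1 := rfl
    have he11 : eps1 1 = 1 := rfl
    have he20 : eps2 0 = 1 := rfl
    have he21 : eps2 1 = -1 := rfl
    have hsubL : Set.Ioo (-h) 0 ⊆ Set.Icc (-h) h := fun x hx => ⟨hx.1.le, by linarith [hx.2]⟩
    have hsubR : Set.Ioo (0:ℝ) h ⊆ Set.Icc (-h) h := fun x hx => ⟨by linarith [hx.1], hx.2.le⟩
    have hclLa : (-h) ∈ closure (Set.Ioo (-h) 0) := by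
      rw [closure_Ioo (by linarith : (-h:ℝ) ≠ 0)]; exact ⟨le_rfl, hmh'⟩
    have hclL0 : (0:ℝ) ∈ closure (Set.Ioo (-h) 0) := by
      rw [closure_Ioo (by linarith : (-h:ℝ) ≠ 0)]; exact ⟨hmh', le_rfl⟩
    have hclR0 : (0:ℝ) ∈ closure (Set.Ioo (0:ℝ) h) := by
      rw [closure_Ioo (ne_of_lt hh)]; exact ⟨le_rfl, h0h⟩
    have hclRh : h ∈ closure (Set.Ioo (0:ℝ) h) := by
      rw [closure_Ioo (ne_of_lt hh)]; exact ⟨h0h, le_rfl⟩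
    -- row facts for t11
    have hF : ∀ j : Fin 2, (p0 0 j - p1 0 j*h + p2 0 j*h^2 = 0) ∧
        (p0 1 j + p1 1 j*h + p2 1 j*h^2 = 0) ∧ (p0 0 j = p0 1 j) := by
      intro j
      have hy0 : ∃ y0 : ℝ, y0 ∈ IxM h j ∧ y0 ≠ 0 ∧ y0 ∈ Set.Ioo (-h) h := by
        rcases fin2_cases j with rfl | rfl
        · exact ⟨-h/2, by rw [IxM0]; constructor <;> linarith, by linarith,
            by constructor <;> linarith⟩
        · exact ⟨h/2, by rw [IxM1]; constructor <;> linarith, by linarith,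
            by constructor <;> linarith⟩
      obtain ⟨y0, hy0j, hy0ne, hy0m⟩ := hy0
      have hcont := hc11 y0 hy0m hy0ne
      have heqL : ∀ x ∈ Set.Ioo (-h) 0, t11 x y0 = p0 0 j + p1 0 j*x + p2 0 j*x^2 :=
        fun x hx => by rw [(hq 0 j x (by rw [IxM0]; exact hx) y0 hy0j).1, hp 0 j x y0]
      have heqR : ∀ x ∈ Set.Ioo (0:ℝ) h, t11 x y0 = p0 1 j + p1 1 j*x + p2 1 j*x^2 :=
        fun x hx => by rw [(hq 1 j x (by rw [IxM1]; exact hx) y0 hy0j).1, hp 1 j x y0]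
      have hvLa := val_of_eqOn_Ioo hsubL ⟨le_rfl, by linarith⟩ hcont (cont_quad _ _ _) heqL hclLa
      have hvL0 := val_of_eqOn_Ioo hsubL ⟨hmh', h0h⟩ hcont (cont_quad _ _ _) heqL hclL0
      have hvR0 := val_of_eqOn_Ioo hsubR ⟨hmh', h0h⟩ hcont (cont_quad _ _ _) heqR hclR0
      have hvRh := val_of_eqOn_Ioo hsubR ⟨by linarith, le_rfl⟩ hcont (cont_quad _ _ _) heqR hclRh
      have hb := hb11 y0 hy0m hy0ne
      exact ⟨by linear_combination hb.1 - hvLa, by linear_combination hb.2 - hvRh,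
        by linear_combination hvR0 - hvL0⟩
    -- column facts for t22
    have hG : ∀ i : Fin 2, (e0 i 0 - e1 i 0*h + e2 i 0*h^2 = 0) ∧
        (e0 i 1 + e1 i 1*h + e2 i 1*h^2 = 0) ∧ (e0 i 0 = e0 i 1) := by
      intro i
      have hx0 : ∃ x0 : ℝ, x0 ∈ IxM h i ∧ x0 ≠ 0 ∧ x0 ∈ Set.Ioo (-h) h := by
        rcases fin2_cases i with rfl | rfl
        · exact ⟨-h/2, by rw [IxM0]; constructor <;> linarith, by linarith,
            by constructor <;> linarith⟩
        · exact ⟨h/2, by rw [IxM1]; constructor <;> linarith, by linarith,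
            by constructor <;> linarith⟩
      obtain ⟨x0, hx0i, hx0ne, hx0m⟩ := hx0
      have hcont := hc22 x0 hx0m hx0ne
      have heqL : ∀ y ∈ Set.Ioo (-h) 0, t22 x0 y = e0 i 0 + e1 i 0*y + e2 i 0*y^2 :=
        fun y hy => by rw [(hq i 0 x0 hx0i y (by rw [IxM0]; exact hy)).2.1, he i 0 x0 y]
      have heqR : ∀ y ∈ Set.Ioo (0:ℝ) h, t22 x0 y = e0 i 1 + e1 i 1*y + e2 i 1*y^2 :=
        fun y hy => by rw [(hq i 1 x0 hx0i y (by rw [IxM1]; exact hy)).2.1, he i 1 x0 y]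
      have hvLa := val_of_eqOn_Ioo hsubL ⟨le_rfl, by linarith⟩ hcont (cont_quad _ _ _) heqL hclLa
      have hvL0 := val_of_eqOn_Ioo hsubL ⟨hmh', h0h⟩ hcont (cont_quad _ _ _) heqL hclL0
      have hvR0 := val_of_eqOn_Ioo hsubR ⟨hmh', h0h⟩ hcont (cont_quad _ _ _) heqR hclR0
      have hvRh := val_of_eqOn_Ioo hsubR ⟨by linarith, le_rfl⟩ hcont (cont_quad _ _ _) heqR hclRh
      have hb := hb22 x0 hx0m hx0ne
      exact ⟨by linear_combination hb.1 - hvLa, by linear_combination hb.2 - hvRh,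
        by linear_combination hvR0 - hvL0⟩
    -- corner values of t12
    have gen : ∀ (a b c d : ℝ), a < b → c < d →
        (-h) ≤ a → b ≤ h → (-h) ≤ c → d ≤ h →
        ∀ (S0 S1 S2 S3 : ℝ),
        (∀ x ∈ Set.Ioo a b, ∀ y ∈ Set.Ioo c d, t12 x y = S0 + S1*x + S2*y + S3*(x*y)) →
        ∀ u v : ℝ, u ∈ Set.Icc a b → v ∈ Set.Icc c d →
          t12 u v = S0 + S1*u + S2*v + S3*(u*v) := by
      intro a b c d hab hcd haL hbU hcL hdU S0 S1 S2 S3 heq u v hu hv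
      have := val2_of_eqOn
        (hsub := Set.prod_mono
          ((Set.Ioo_subset_Icc_self).trans (Set.Icc_subset_Icc haL hbU))
          ((Set.Ioo_subset_Icc_self).trans (Set.Icc_subset_Icc hcL hdU)))
        (hcS := Set.mk_mem_prod (Set.Icc_subset_Icc haL hbU hu) (Set.Icc_subset_Icc hcL hdU hv))
        (f := fun z : ℝ × ℝ => t12 z.1 z.2)
        (g := fun z : ℝ × ℝ => S0 + S1*z.1 + S2*z.2 + S3*(z.1*z.2))
        hc12 (cont_bilin S0 S1 S2 S3)
        (fun z hz => heq z.1 hz.1 z.2 hz.2)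
        (by rw [closure_prod_eq, closure_Ioo hab.ne, closure_Ioo hcd.ne]
            exact Set.mk_mem_prod hu hv)
      exact this
    have heq00 : ∀ x ∈ Set.Ioo (-h) 0, ∀ y ∈ Set.Ioo (-h) 0,
        t12 x y = s0 0 0 + s1 0 0*x + s2 0 0*y + s3 0 0*(x*y) := fun x hx y hy => by
      rw [(hq 0 0 x (by rw [IxM0]; exact hx) y (by rw [IxM0]; exact hy)).2.2, hs 0 0 x y]
    have heq10 : ∀ x ∈ Set.Ioo (0:ℝ) h, ∀ y ∈ Set.Ioo (-h) 0,
        t12 x y = s0 1 0 + s1 1 0*x + s2 1 0*y + s3 1 0*(x*y) := fun x hx y hy => by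
      rw [(hq 1 0 x (by rw [IxM1]; exact hx) y (by rw [IxM0]; exact hy)).2.2, hs 1 0 x y]
    have heq01 : ∀ x ∈ Set.Ioo (-h) 0, ∀ y ∈ Set.Ioo (0:ℝ) h,
        t12 x y = s0 0 1 + s1 0 1*x + s2 0 1*y + s3 0 1*(x*y) := fun x hx y hy => by
      rw [(hq 0 1 x (by rw [IxM0]; exact hx) y (by rw [IxM1]; exact hy)).2.2, hs 0 1 x y]
    have heq11 : ∀ x ∈ Set.Ioo (0:ℝ) h, ∀ y ∈ Set.Ioo (0:ℝ) h,
        t12 x y = s0 1 1 + s1 1 1*x + s2 1 1*y + s3 1 1*(x*y) := fun x hx y hy => by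
      rw [(hq 1 1 x (by rw [IxM1]; exact hx) y (by rw [IxM1]; exact hy)).2.2, hs 1 1 x y]
    have gen00 := gen (-h) 0 (-h) 0 hmh hmh le_rfl h0h le_rfl h0h _ _ _ _ heq00
    have gen10 := gen 0 h (-h) 0 hh hmh (by linarith) le_rfl le_rfl h0h _ _ _ _ heq10
    have gen01 := gen (-h) 0 0 h hmh hh le_rfl h0h (by linarith) le_rfl _ _ _ _ heq01
    have gen11 := gen 0 h 0 h hh hh (by linarith) le_rfl (by linarith) le_rfl _ _ _ _ heq11
    -- frontier zeros
    have hfr1 : ∀ u v : ℝ, -h ≤ u → u ≤ h → (v = -h ∨ v = h) → t12 u v = 0 := by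
      intro u v hu1 hu2 hv
      apply hb12 (u, v)
      rw [frontier_prod_eq]
      left
      refine Set.mk_mem_prod ?_ ?_
      · rw [closure_Ioo hhh.ne]; exact ⟨hu1, hu2⟩
      · rw [frontier_Ioo hhh]
        rcases hv with rfl | rfl
        · exact Set.mem_insert _ _
        · exact Set.mem_insert_of_mem _ rfl
    have hfr2 : ∀ u v : ℝ, (u = -h ∨ u = h) → -h ≤ v → v ≤ h → t12 u v = 0 := by
      intro u v hu hv1 hv2
      apply hb12 (u, v)
      rw [frontier_prod_eq]
      right
      refine Set.mk_mem_prod ?_ ?_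
      · rw [frontier_Ioo hhh]
        rcases hu with rfl | rfl
        · exact Set.mem_insert _ _
        · exact Set.mem_insert_of_mem _ rfl
      · rw [closure_Ioo hhh.ne]; exact ⟨hv1, hv2⟩
    -- the sixteen corner equations
    have icc_m : (-h) ∈ Set.Icc (-h) (0:ℝ) := ⟨le_rfl, hmh'⟩
    have icc_0L : (0:ℝ) ∈ Set.Icc (-h) (0:ℝ) := ⟨hmh', le_rfl⟩
    have icc_0R : (0:ℝ) ∈ Set.Icc (0:ℝ) h := ⟨le_rfl, h0h⟩
    have icc_h : h ∈ Set.Icc (0:ℝ) h := ⟨h0h, le_rfl⟩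
    have c00a : s0 0 0 + s1 0 0*(-h) + s2 0 0*(-h) + s3 0 0*((-h)*(-h)) = 0 := by
      linear_combination hfr1 (-h) (-h) le_rfl (hmh'.trans h0h) (Or.inl rfl) - gen00 (-h) (-h) icc_m icc_m
    have c00b : s0 0 0 + s2 0 0*(-h) = 0 := by
      linear_combination hfr1 0 (-h) hmh' h0h (Or.inl rfl) - gen00 0 (-h) icc_0L icc_m
    have c00c : s0 0 0 + s1 0 0*(-h) = 0 := by
      linear_combination hfr2 (-h) 0 (Or.inl rfl) hmh' h0h - gen00 (-h) 0 icc_m icc_0L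
    have c00d : s0 0 0 = t12 0 0 := by
      linear_combination - gen00 0 0 icc_0L icc_0L
    have c10a : s0 1 0 + s2 1 0*(-h) = 0 := by
      linear_combination hfr1 0 (-h) hmh' h0h (Or.inl rfl) - gen10 0 (-h) icc_0R icc_m
    have c10b : s0 1 0 + s1 1 0*h + s2 1 0*(-h) + s3 1 0*(h*(-h)) = 0 := by
      linear_combination hfr1 h (-h) (by linarith) le_rfl (Or.inl rfl) - gen10 h (-h) icc_h icc_m
    have c10c : s0 1 0 = t12 0 0 := by
      linear_combination - gen10 0 0 icc_0R icc_0L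
    have c10d : s0 1 0 + s1 1 0*h = 0 := by
      linear_combination hfr2 h 0 (Or.inr rfl) hmh' h0h - gen10 h 0 icc_h icc_0L
    have c01a : s0 0 1 + s1 0 1*(-h) = 0 := by
      linear_combination hfr2 (-h) 0 (Or.inl rfl) hmh' h0h - gen01 (-h) 0 icc_m icc_0R
    have c01b : s0 0 1 = t12 0 0 := by
      linear_combination - gen01 0 0 icc_0L icc_0R
    have c01c : s0 0 1 + s1 0 1*(-h) + s2 0 1*h + s3 0 1*((-h)*h) = 0 := by
      linear_combination hfr1 (-h) h le_rfl (by linarith) (Or.inr rfl) - gen01 (-h) h icc_m icc_h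
    have c01d : s0 0 1 + s2 0 1*h = 0 := by
      linear_combination hfr1 0 h hmh' h0h (Or.inr rfl) - gen01 0 h icc_0L icc_h
    have c11a : s0 1 1 = t12 0 0 := by
      linear_combination - gen11 0 0 icc_0R icc_0R
    have c11b : s0 1 1 + s1 1 1*h = 0 := by
      linear_combination hfr2 h 0 (Or.inr rfl) hmh' h0h - gen11 h 0 icc_h icc_0R
    have c11c : s0 1 1 + s2 1 1*h = 0 := by
      linear_combination hfr1 0 h hmh' h0h (Or.inr rfl) - gen11 0 h icc_0R icc_h
    have c11d : s0 1 1 + s1 1 1*h + s2 1 1*h + s3 1 1*(h*h) = 0 := by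
      linear_combination hfr1 h h (by linarith) le_rfl (Or.inr rfl) - gen11 h h icc_h icc_h
    -- derived product facts
    have a1 : h*(s1 0 0) = t12 0 0 := by linear_combination c00d - c00c
    have a2 : h*(s2 0 0) = t12 0 0 := by linear_combination c00d - c00b
    have a3 : h^2*(s3 0 0) = t12 0 0 := by linear_combination c00a + a1 + a2 - c00d
    have b1 : h*(s1 1 0) = -(t12 0 0) := by linear_combination c10d - c10c
    have b2 : h*(s2 1 0) = t12 0 0 := by linear_combination c10c - c10a
    have b3 : h^2*(s3 1 0) = -(t12 0 0) := by linear_combination - c10b + c10c + b1 - b2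
    have d1 : h*(s1 0 1) = t12 0 0 := by linear_combination c01b - c01a
    have d2 : h*(s2 0 1) = -(t12 0 0) := by linear_combination c01d - c01b
    have d3 : h^2*(s3 0 1) = -(t12 0 0) := by linear_combination - c01c - d1 + d2 + c01b
    have k1 : h*(s1 1 1) = -(t12 0 0) := by linear_combination c11b - c11a
    have k2 : h*(s2 1 1) = -(t12 0 0) := by linear_combination c11c - c11a
    have k3 : h^2*(s3 1 1) = t12 0 0 := by linear_combination c11d - k1 - k2 - c11a
    -- row/column sums
    have hrow : ∀ j : Fin 2, h*(p1 0 j) - h^2*(p2 0 j) + h*(p1 1 j) + h^2*(p2 1 j) = 0 :=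
      fun j => by linear_combination - (hF j).1 + (hF j).2.1 + (hF j).2.2
    have hcol : ∀ i : Fin 2, h*(e1 i 0) - h^2*(e2 i 0) + h*(e1 i 1) + h^2*(e2 i 1) = 0 :=
      fun i => by linear_combination - (hG i).1 + (hG i).2.1 + (hG i).2.2
    -- derivative formulas
    have hDx11 : ∀ i j : Fin 2, ∀ x ∈ IxM h i, ∀ y ∈ IxM h j,
        Dx t11 x y = p1 i j + 2*p2 i j*x := by
      intro i j x hx y hy
      have key : ∀ a b : ℝ, IxM h i = Set.Ioo a b → Dx t11 x y = p1 i j + 2*p2 i j*x := by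
        intro a b hiab
        rw [hiab] at hx
        rw [Dx, deriv_eq_of_eqOn_Ioo hx (g := fun t => p0 i j + p1 i j*t + p2 i j*t^2)
          (fun t ht => by rw [(hq i j t (by rw [hiab]; exact ht) y hy).1, hp i j t y]),
          deriv_quad]
      rcases fin2_cases i with rfl | rfl
      · exact key _ _ (IxM0 h)
      · exact key _ _ (IxM1 h)
    have hDy22 : ∀ i j : Fin 2, ∀ x ∈ IxM h i, ∀ y ∈ IxM h j,
        Dy t22 x y = e1 i j + 2*e2 i j*y := by
      intro i j x hx y hy
      have key : ∀ a b : ℝ, IxM h j = Set.Ioo a b → Dy t22 x y = e1 i j + 2*e2 i j*y := by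
        intro a b hjab
        rw [hjab] at hy
        rw [Dy, deriv_eq_of_eqOn_Ioo hy (g := fun t => e0 i j + e1 i j*t + e2 i j*t^2)
          (fun t ht => by rw [(hq i j x hx t (by rw [hjab]; exact ht)).2.1, he i j x t]),
          deriv_quad]
      rcases fin2_cases j with rfl | rfl
      · exact key _ _ (IxM0 h)
      · exact key _ _ (IxM1 h)
    have hDy12 : ∀ i j : Fin 2, ∀ x ∈ IxM h i, ∀ y ∈ IxM h j,
        Dy t12 x y = s2 i j + s3 i j*x := by
      intro i j x hx y hy
      have key : ∀ a b : ℝ, IxM h j = Set.Ioo a b → Dy t12 x y = s2 i j + s3 i j*x := by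
        intro a b hjab
        rw [hjab] at hy
        rw [Dy, deriv_eq_of_eqOn_Ioo hy
          (g := fun t => s0 i j + s1 i j*x + s2 i j*t + s3 i j*(x*t))
          (fun t ht => by rw [(hq i j x hx t (by rw [hjab]; exact ht)).2.2, hs i j x t]),
          deriv_bilin_y]
      rcases fin2_cases j with rfl | rfl
      · exact key _ _ (IxM0 h)
      · exact key _ _ (IxM1 h)
    have hDx12 : ∀ i j : Fin 2, ∀ x ∈ IxM h i, ∀ y ∈ IxM h j,
        Dx t12 x y = s1 i j + s3 i j*y := by
      intro i j x hx y hy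
      have key : ∀ a b : ℝ, IxM h i = Set.Ioo a b → Dx t12 x y = s1 i j + s3 i j*y := by
        intro a b hiab
        rw [hiab] at hx
        rw [Dx, deriv_eq_of_eqOn_Ioo hx
          (g := fun t => s0 i j + s1 i j*t + s2 i j*y + s3 i j*(t*y))
          (fun t ht => by rw [(hq i j t (by rw [hiab]; exact ht) y hy).2.2, hs i j t y]),
          deriv_bilin_x]
      rcases fin2_cases i with rfl | rfl
      · exact key _ _ (IxM0 h)
      · exact key _ _ (IxM1 h)
    -- evaluate the integral
    rw [iiM_expand]
    rw [ii2_congr hmh' hmh' (g := fun x y => (((α - γ)*(p1 0 0 + s2 0 0)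
        + ((α - γ)*(2*p2 0 0 + s3 0 0))*x + 0*x^2) + ((β + γ)*(s1 0 0 + e1 0 0)
        + ((β + γ)*(s3 0 0 + 2*e2 0 0))*y + 0*y^2)))
      (fun x hx y hy => by
        have hxm : x ∈ IxM h 0 := by rw [IxM0]; exact hx
        have hym : y ∈ IxM h 0 := by rw [IxM0]; exact hy
        rw [hDx11 0 0 x hxm y hym, hDy12 0 0 x hxm y hym, hDx12 0 0 x hxm y hym,
          hDy22 0 0 x hxm y hym, (hR 0 0 x hxm y hym).1, (hR 0 0 x hxm y hym).2,
          he10, he20]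
        ring),
      ii2_congr hmh' h0h (g := fun x y => (((α + γ)*(p1 0 1 + s2 0 1)
        + ((α + γ)*(2*p2 0 1 + s3 0 1))*x + 0*x^2) + ((β + γ)*(s1 0 1 + e1 0 1)
        + ((β + γ)*(s3 0 1 + 2*e2 0 1))*y + 0*y^2)))
      (fun x hx y hy => by
        have hxm : x ∈ IxM h 0 := by rw [IxM0]; exact hx
        have hym : y ∈ IxM h 1 := by rw [IxM1]; exact hy
        rw [hDx11 0 1 x hxm y hym, hDy12 0 1 x hxm y hym, hDx12 0 1 x hxm y hym,
          hDy22 0 1 x hxm y hym, (hR 0 1 x hxm y hym).1, (hR 0 1 x hxm y hym).2,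
          he11, he20]
        ring),
      ii2_congr h0h hmh' (g := fun x y => (((α - γ)*(p1 1 0 + s2 1 0)
        + ((α - γ)*(2*p2 1 0 + s3 1 0))*x + 0*x^2) + ((β - γ)*(s1 1 0 + e1 1 0)
        + ((β - γ)*(s3 1 0 + 2*e2 1 0))*y + 0*y^2)))
      (fun x hx y hy => by
        have hxm : x ∈ IxM h 1 := by rw [IxM1]; exact hx
        have hym : y ∈ IxM h 0 := by rw [IxM0]; exact hy
        rw [hDx11 1 0 x hxm y hym, hDy12 1 0 x hxm y hym, hDx12 1 0 x hxm y hym,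
          hDy22 1 0 x hxm y hym, (hR 1 0 x hxm y hym).1, (hR 1 0 x hxm y hym).2,
          he10, he21]
        ring),
      ii2_congr h0h h0h (g := fun x y => (((α + γ)*(p1 1 1 + s2 1 1)
        + ((α + γ)*(2*p2 1 1 + s3 1 1))*x + 0*x^2) + ((β - γ)*(s1 1 1 + e1 1 1)
        + ((β - γ)*(s3 1 1 + 2*e2 1 1))*y + 0*y^2)))
      (fun x hx y hy => by
        have hxm : x ∈ IxM h 1 := by rw [IxM1]; exact hx
        have hym : y ∈ IxM h 1 := by rw [IxM1]; exact hy
        rw [hDx11 1 1 x hxm y hym, hDy12 1 1 x hxm y hym, hDx12 1 1 x hxm y hym,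
          hDy22 1 1 x hxm y hym, (hR 1 1 x hxm y hym).1, (hR 1 1 x hxm y hym).2,
          he11, he21]
        ring),
      elem_int, elem_int, elem_int, elem_int]
    linear_combination
      (h*(α - γ)) * hrow 0 + (h*(α + γ)) * hrow 1
      + (h*(β + γ)) * hcol 0 + (h*(β - γ)) * hcol 1
      + (h*(α - γ)) * a2 + (h*(β + γ)) * a1 + (-h*((α - γ)+(β + γ))/2) * a3
      + (h*(α - γ)) * b2 + (h*(β - γ)) * b1 + (h*((α - γ)-(β - γ))/2) * b3
      + (h*(α + γ)) * d2 + (h*(β + γ)) * d1 + (h*((β + γ)-(α + γ))/2) * d3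
      + (h*(α + γ)) * k2 + (h*(β - γ)) * k1 + (h*((α + γ)+(β - γ))/2) * k3
end
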